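/- arXiv:1904.04448 — 4 statements merged into one kernel-verified Lean document; each statement's English description precedes it below -/
import Mathlib

section
/- Let X be a vector space with a complete invariant metric d satisfying d(λx, λy) ≤ λ d(x,y) for λ ∈ [0,1). If f : [a,b] → X is bounded and continuous almost everywhere on [a,b], then f is Riemann integrable on [a,b]. -/
open Set MeasureTheory

/-- A tagged partition of `[a,b]`: points `a = t 0 < t 1 < ⋯ < t n = b`
with tags `s i ∈ [t i, t (i+1)]`. -/
structure TaggedPartition (a b : ℝ) where
  n : ℕ
  t : ℕ → ℝ
  s : ℕ → ℝ
  npos : 0 < n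
  left : t 0 = a
  right : t n = b
  mono : ∀ i < n, t i < t (i + 1)
  tag_mem : ∀ i < n, s i ∈ Set.Icc (t i) (t (i + 1))

/-- The mesh of the partition is `< δ`. -/
def TaggedPartition.MeshLT {a b : ℝ} (P : TaggedPartition a b) (δ : ℝ) : Prop :=
  ∀ i < P.n, P.t (i + 1) - P.t i < δ

/-- The set of partition points of a tagged partition. -/
def TaggedPartition.points {a b : ℝ} (P : TaggedPartition a b) : Set ℝ :=
  {x | ∃ i ≤ P.n, P.t i = x}

/-- The Riemann sum `f(Δ) = Σᵢ (tᵢ₊₁ - tᵢ) • f(sᵢ)`. -/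
def riemannSum {X : Type*} [AddCommGroup X] [Module ℝ X]
    (f : ℝ → X) {a b : ℝ} (P : TaggedPartition a b) : X :=
  ∑ i ∈ Finset.range P.n, (P.t (i + 1) - P.t i) • f (P.s i)

/-- `f` has Riemann integral `x` on `[a,b]` (mesh-based definition, metric `dist`). -/
def HasRiemannIntegral {X : Type*} [MetricSpace X] [AddCommGroup X] [Module ℝ X]
    (f : ℝ → X) (a b : ℝ) (x : X) : Prop :=
  ∀ ε > 0, ∃ δ > 0, ∀ P : TaggedPartition a b, P.MeshLT δ →
    dist (riemannSum f P) x < ε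


set_option linter.unusedSectionVars false

lemma RP.mono_of_lt (u : ℕ → ℝ) (N : ℕ) (hu : ∀ j < N, u j < u (j+1)) :
    ∀ i j, i ≤ j → j ≤ N → u i ≤ u j := by
  intro i j
  induction j with
  | zero => intro hij _; simp [Nat.le_zero.mp hij]
  | succ j ih =>
    intro hij hj
    rcases Nat.lt_or_ge i (j+1) with h | h
    · exact le_trans (ih (by omega) (by omega)) (le_of_lt (hu j (by omega)))
    · have : i = j + 1 := by omega
      simp [this]

lemma RP.strict_of_lt (u : ℕ → ℝ) (N : ℕ) (hu : ∀ j < N, u j < u (j+1)) :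
    ∀ i j, i < j → j ≤ N → u i < u j := by
  intro i j hij hj
  calc u i < u (i+1) := hu i (by omega)
  _ ≤ u j := RP.mono_of_lt u N hu (i+1) j (by omega) hj

lemma RP.t_mem {a b : ℝ} (P : TaggedPartition a b) (i : ℕ) (hi : i ≤ P.n) :
    P.t i ∈ Set.Icc a b := by
  have h1 := RP.mono_of_lt P.t P.n P.mono 0 i (by omega) hi
  have h2 := RP.mono_of_lt P.t P.n P.mono i P.n hi le_rfl
  rw [P.left] at h1; rw [P.right] at h2
  exact ⟨h1, h2⟩

section VS
variable {X : Type*} [MetricSpace X] [AddCommGroup X] [Module ℝ X]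

lemma RP.dist_add_add (hinv : ∀ x y z : X, dist (x + z) (y + z) = dist x y)
    (a b c d : X) : dist (a + c) (b + d) ≤ dist a b + dist c d := by
  calc dist (a + c) (b + d) ≤ dist (a + c) (b + c) + dist (b + c) (b + d) := dist_triangle _ _ _
  _ = dist a b + dist c d := by
      rw [hinv]
      congr 1
      rw [add_comm b c, add_comm b d, show c + b = c + b from rfl]
      rw [hinv]

lemma RP.dist_sum_sum (hinv : ∀ x y z : X, dist (x + z) (y + z) = dist x y)
    (hscale : ∀ l : ℝ, 0 ≤ l → l < 1 → ∀ x y : X, dist (l • x) (l • y) ≤ l * dist x y)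
    (c : ℕ → ℝ) (x y : ℕ → X) (n : ℕ)
    (h0 : ∀ j < n, 0 ≤ c j) (h1 : ∀ j < n, c j < 1) :
    dist (∑ j ∈ Finset.range n, c j • x j) (∑ j ∈ Finset.range n, c j • y j)
      ≤ ∑ j ∈ Finset.range n, c j * dist (x j) (y j) := by
  induction n with
  | zero => simp
  | succ n ih =>
    rw [Finset.sum_range_succ, Finset.sum_range_succ, Finset.sum_range_succ]
    refine le_trans (RP.dist_add_add hinv _ _ _ _) ?_
    exact add_le_add (ih (fun j hj => h0 j (by omega)) (fun j hj => h1 j (by omega)))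
      (hscale _ (h0 n (by omega)) (h1 n (by omega)) _ _)

end VS

lemma RP.sum_blocks {X : Type*} [AddCommGroup X] [Module ℝ X] (u : ℕ → ℝ) (ψ : ℕ → ℕ) (cc : ℕ → X) (g : ℕ → X) (h0 : ψ 0 = 0) :
    ∀ m : ℕ, (∀ i < m, ψ i ≤ ψ (i+1)) →
      (∀ i < m, ∀ j, ψ i ≤ j → j < ψ (i+1) → g j = cc i) →
      ∑ j ∈ Finset.range (ψ m), (u (j+1) - u j) • g j
        = ∑ i ∈ Finset.range m, (u (ψ (i+1)) - u (ψ i)) • cc i := by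
  intro m
  induction m with
  | zero => simp [h0]
  | succ m ih =>
    intro hmono hg
    have hle : ψ m ≤ ψ (m+1) := hmono m (by omega)
    rw [Finset.range_eq_Ico, ← Finset.sum_Ico_consecutive _ (Nat.zero_le (ψ m)) hle,
      ← Finset.range_eq_Ico, ih (fun i hi => hmono i (by omega)) (fun i hi _ h1 h2 => hg i (by omega) _ h1 h2),
      Finset.sum_range_succ]
    congr 1
    have hcongr : ∀ j ∈ Finset.Ico (ψ m) (ψ (m+1)), (u (j+1) - u j) • g j = (u (j+1) - u j) • cc m := by
      intro j hj
      rw [hg m (by omega) j (Finset.mem_Ico.mp hj).1 (Finset.mem_Ico.mp hj).2]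
    rw [Finset.sum_congr rfl hcongr, ← Finset.sum_smul]
    congr 1
    rw [Finset.sum_Ico_eq_sub (fun j => u (j+1) - u j) hle,
      Finset.sum_range_sub u, Finset.sum_range_sub u]
    ring

lemma RP.represent {X : Type*} [AddCommGroup X] [Module ℝ X] (f : ℝ → X) {a b : ℝ}
    (P : TaggedPartition a b) (u : ℕ → ℝ) (N : ℕ)
    (hu : ∀ j < N, u j < u (j+1)) (h0 : u 0 = a) (hN : u N = b)
    (hmem : ∀ i ≤ P.n, ∃ j ≤ N, u j = P.t i) :
    ∃ g : ℕ → X,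
      riemannSum f P = ∑ j ∈ Finset.range N, (u (j+1) - u j) • g j
      ∧ ∀ j < N, ∃ i < P.n, g j = f (P.s i) ∧ P.t i ≤ u j ∧ u (j+1) ≤ P.t (i+1) := by
  classical
  choose! ψ hψle hψeq using hmem
  have humono := RP.mono_of_lt u N hu
  have hustrict := RP.strict_of_lt u N hu
  have hψstrict : ∀ i i', i < i' → i' ≤ P.n → ψ i < ψ i' := by
    intro i i' h hle
    by_contra hcon
    push_neg at hcon
    have h1 : u (ψ i') ≤ u (ψ i) := humono _ _ hcon (hψle i (by omega))
    rw [hψeq i (by omega), hψeq i' hle] at h1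
    have h2 : P.t i < P.t i' := by
      calc P.t i < P.t (i+1) := P.mono i (by omega)
      _ ≤ P.t i' := RP.mono_of_lt P.t P.n P.mono (i+1) i' (by omega) hle
    linarith
  have hψ0 : ψ 0 = 0 := by
    by_contra hcon
    have h1 : u 0 < u (ψ 0) := hustrict 0 (ψ 0) (by omega) (hψle 0 (by omega))
    rw [hψeq 0 (by omega), P.left, h0] at h1
    linarith
  have hψn : ψ P.n = N := by
    rcases Nat.lt_or_ge (ψ P.n) N with h | h
    · exfalso
      have h1 : u (ψ P.n) < u N := hustrict _ _ h le_rfl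
      rw [hψeq P.n le_rfl, P.right, hN] at h1
      linarith
    · exact le_antisymm (hψle P.n le_rfl) h
  have hex : ∀ j, j < N → ∃ i, i < P.n ∧ ψ i ≤ j ∧ j < ψ (i+1) := by
    intro j hj
    have hFne : ((Finset.range (P.n+1)).filter (fun i => ψ i ≤ j)).Nonempty :=
      ⟨0, Finset.mem_filter.mpr ⟨Finset.mem_range.mpr (by omega), by rw [hψ0]; omega⟩⟩
    obtain ⟨hm1, hm2⟩ := Finset.mem_filter.mp (Finset.max'_mem _ hFne)
    rw [Finset.mem_range] at hm1
    have hlt : Finset.max' _ hFne < P.n := by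
      rcases Nat.lt_or_ge (Finset.max' _ hFne) P.n with h | h
      · exact h
      · exfalso
        have he : Finset.max' _ hFne = P.n := by omega
        rw [he, hψn] at hm2
        omega
    have hjlt : j < ψ (Finset.max' _ hFne + 1) := by
      by_contra hcon
      push_neg at hcon
      have hmm : Finset.max' _ hFne + 1 ≤ Finset.max' _ hFne :=
        Finset.le_max' ((Finset.range (P.n+1)).filter (fun i => ψ i ≤ j))
          (Finset.max' _ hFne + 1)
          (Finset.mem_filter.mpr ⟨Finset.mem_range.mpr (by omega), hcon⟩)
      omega
    exact ⟨_, hlt, hm2, hjlt⟩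
  choose! idx hidx1 hidx2 hidx3 using hex
  have huniq : ∀ i < P.n, ∀ j, ψ i ≤ j → j < ψ (i+1) → idx j = i := by
    intro i hi j h1 h2
    have hj : j < N := by
      have : ψ (i+1) ≤ N := hψle (i+1) (by omega)
      omega
    have g1 := hidx1 j hj
    have g2 := hidx2 j hj
    have g3 := hidx3 j hj
    rcases Nat.lt_trichotomy (idx j) i with h | h | h
    · exfalso
      have hle2 : ψ (idx j + 1) ≤ ψ i := by
        rcases Nat.lt_or_ge (idx j + 1) i with hh | hh
        · exact le_of_lt (hψstrict _ _ hh (by omega))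
        · have he : idx j + 1 = i := by omega
          rw [he]
      omega
    · exact h
    · exfalso
      have hle2 : ψ (i + 1) ≤ ψ (idx j) := by
        rcases Nat.lt_or_ge (i+1) (idx j) with hh | hh
        · exact le_of_lt (hψstrict _ _ hh (by omega))
        · have he : i + 1 = idx j := by omega
          rw [he]
      omega
  refine ⟨fun j => f (P.s (idx j)), ?_, ?_⟩
  · unfold riemannSum
    have hsb := RP.sum_blocks u ψ (fun i => f (P.s i)) (fun j => f (P.s (idx j))) hψ0 P.n
      (fun i hi => le_of_lt (hψstrict i (i+1) (by omega) (by omega)))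
      (fun i hi j h1 h2 => by show f (P.s (idx j)) = f (P.s i); rw [huniq i hi j h1 h2])
    rw [hψn] at hsb
    rw [hsb]
    apply Finset.sum_congr rfl
    intro i hi
    rw [Finset.mem_range] at hi
    rw [hψeq i (by omega), hψeq (i+1) (by omega)]
  · intro j hj
    refine ⟨idx j, hidx1 j hj, rfl, ?_, ?_⟩
    · have h := humono _ _ (hidx2 j hj) (le_of_lt hj)
      rwa [hψeq _ (le_of_lt (hidx1 j hj))] at h
    · have hip : idx j + 1 ≤ P.n := by
        have := hidx1 j hj
        omega
      have h := humono (j+1) (ψ (idx j + 1)) (hidx3 j hj) (hψle _ hip)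
      rwa [hψeq _ hip] at h

lemma RP.exists_common {a b : ℝ} (P Q : TaggedPartition a b) :
    ∃ (u : ℕ → ℝ) (N : ℕ),
      (∀ j < N, u j < u (j+1)) ∧ u 0 = a ∧ u N = b ∧
      (∀ j ≤ N, u j ∈ Set.Icc a b) ∧
      (∀ i ≤ P.n, ∃ j ≤ N, u j = P.t i) ∧
      (∀ i ≤ Q.n, ∃ j ≤ N, u j = Q.t i) := by
  classical
  set S : Finset ℝ := (Finset.range (P.n+1)).image P.t ∪ (Finset.range (Q.n+1)).image Q.t with hS
  set l := S.sort (· ≤ ·) with hl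
  have hsort : l.SortedLT := Finset.sortedLT_sort S
  have hmemS : ∀ x ∈ S, x ∈ Set.Icc a b := by
    intro x hx
    rw [hS, Finset.mem_union] at hx
    rcases hx with hx | hx <;> obtain ⟨i, hi, rfl⟩ := Finset.mem_image.mp hx
    · exact RP.t_mem P i (by rw [Finset.mem_range] at hi; omega)
    · exact RP.t_mem Q i (by rw [Finset.mem_range] at hi; omega)
  have haS : a ∈ S := by
    rw [hS, Finset.mem_union]
    left
    exact Finset.mem_image.mpr ⟨0, Finset.mem_range.mpr (by omega), P.left⟩
  have hbS : b ∈ S := by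
    rw [hS, Finset.mem_union]
    left
    exact Finset.mem_image.mpr ⟨P.n, Finset.mem_range.mpr (by omega), P.right⟩
  have hla : a ∈ l := (Finset.mem_sort _).mpr haS
  have hlb : b ∈ l := (Finset.mem_sort _).mpr hbS
  have hlen : 0 < l.length := List.length_pos_iff.mpr (List.ne_nil_of_mem hla)
  have hget : ∀ j, ∀ h : j < l.length, l.getD j 0 = l.get ⟨j, h⟩ := by
    intro j h
    rw [List.getD_eq_getElem l 0 h]
    simp
  have hmono : ∀ j k, j ≤ k → ∀ hk : k < l.length, l.getD j 0 ≤ l.getD k 0 := by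
    intro j k hjk hk
    rw [hget j (by omega), hget k hk]
    exact hsort.strictMono_get.monotone (by simpa using hjk)
  have hmemget : ∀ j, ∀ h : j < l.length, l.getD j 0 ∈ S := by
    intro j h
    rw [hget j h]
    exact (Finset.mem_sort _).mp (List.get_mem l ⟨j, h⟩)
  have hin : ∀ x ∈ S, ∃ j, ∃ h : j < l.length, l.getD j 0 = x := by
    intro x hx
    obtain ⟨⟨k, hk⟩, he⟩ := List.mem_iff_get.mp (show x ∈ l from (Finset.mem_sort (α := ℝ) (· ≤ ·)).mpr hx)
    exact ⟨k, hk, by rw [hget k hk]; exact he⟩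
  have hu0 : l.getD 0 0 = a := by
    obtain ⟨k, hk, he⟩ := hin a haS
    have h1 := hmono 0 k (by omega) hk
    rw [he] at h1
    have h2 := (hmemS _ (hmemget 0 hlen)).1
    linarith
  have huN : l.getD (l.length - 1) 0 = b := by
    obtain ⟨k, hk, he⟩ := hin b hbS
    have h1 := hmono k (l.length - 1) (by omega) (by omega)
    rw [he] at h1
    have h2 := (hmemS _ (hmemget (l.length - 1) (by omega))).2
    linarith
  refine ⟨fun j => l.getD j 0, l.length - 1, ?_, hu0, huN, ?_, ?_, ?_⟩
  · intro j hj
    show l.getD j 0 < l.getD (j+1) 0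
    rw [hget j (by omega), hget (j+1) (by omega)]
    exact hsort.strictMono_get (by simp)
  · intro j hj
    exact hmemS _ (hmemget j (by omega))
  · intro i hi
    have : P.t i ∈ S := by
      rw [hS, Finset.mem_union]
      left
      exact Finset.mem_image.mpr ⟨i, Finset.mem_range.mpr (by omega), rfl⟩
    obtain ⟨j, hjl, he⟩ := hin _ this
    exact ⟨j, by omega, he⟩
  · intro i hi
    have : Q.t i ∈ S := by
      rw [hS, Finset.mem_union]
      right
      exact Finset.mem_image.mpr ⟨i, Finset.mem_range.mpr (by omega), rfl⟩
    obtain ⟨j, hjl, he⟩ := hin _ this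
    exact ⟨j, by omega, he⟩

lemma RP.exists_partition {a b : ℝ} (hab : a < b) (δ : ℝ) (hδ : 0 < δ) :
    ∃ P : TaggedPartition a b, P.MeshLT δ := by
  set n : ℕ := ⌈(b - a)/δ⌉₊ + 1 with hn
  have hnpos : 0 < n := Nat.succ_pos _
  have hnR : (0:ℝ) < n := Nat.cast_pos.mpr hnpos
  have hlt : (b - a)/δ < n := by
    calc (b-a)/δ ≤ ⌈(b - a)/δ⌉₊ := Nat.le_ceil _
    _ < n := by rw [hn]; push_cast; linarith
  have hc : 0 < (b - a)/n := by
    apply div_pos (by linarith) hnR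
  have hmesh : (b - a)/n < δ := by
    rw [div_lt_iff₀ hnR]
    rw [div_lt_iff₀ hδ] at hlt
    linarith
  have hmono : ∀ i : ℕ, (a + i * ((b-a)/n)) < (a + (i+1:ℕ) * ((b-a)/n)) := by
    intro i
    have hcast : ((i+1:ℕ):ℝ) = (i:ℝ)+1 := by push_cast; ring
    rw [hcast]
    nlinarith [hc]
  refine ⟨⟨n, fun i => a + i * ((b-a)/n), fun i => a + i * ((b-a)/n), hnpos, by simp, ?_,
    fun i _ => hmono i, fun i _ => ⟨le_rfl, le_of_lt (hmono i)⟩⟩, ?_⟩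
  · show a + (n:ℝ) * ((b-a)/n) = b
    field_simp
    ring
  · intro i _
    show (a + ((i+1:ℕ):ℝ) * ((b-a)/n)) - (a + (i:ℝ) * ((b-a)/n)) < δ
    have hcast : ((i+1:ℕ):ℝ) = (i:ℝ)+1 := by push_cast; ring
    rw [hcast]
    have heq : (a + ((i:ℝ)+1) * ((b-a)/(n:ℝ))) - (a + (i:ℝ) * ((b-a)/(n:ℝ))) = (b-a)/(n:ℝ) := by
      ring
    rw [heq]
    exact hmesh

lemma RP.cauchy_est {X : Type*} [MetricSpace X] [AddCommGroup X] [Module ℝ X]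
    (hinv : ∀ x y z : X, dist (x + z) (y + z) = dist x y)
    (hscale : ∀ l : ℝ, 0 ≤ l → l < 1 → ∀ x y : X, dist (l • x) (l • y) ≤ l * dist x y)
    {a b : ℝ} (hab : a < b) (f : ℝ → X)
    (hbdd : ∃ L, ∀ t ∈ Set.Icc a b, dist 0 (f t) ≤ L)
    (hae : volume {t ∈ Set.Icc a b | ¬ ContinuousWithinAt f (Set.Icc a b) t} = 0)
    (ε : ℝ) (hε : 0 < ε) :
    ∃ δ > 0, ∀ P Q : TaggedPartition a b, P.MeshLT δ → Q.MeshLT δ →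
      dist (riemannSum f P) (riemannSum f Q) ≤ ε := by
  classical
  obtain ⟨L, hL⟩ := hbdd
  have hL0 : 0 ≤ L := le_trans dist_nonneg (hL a ⟨le_refl a, le_of_lt hab⟩)
  set D := {t ∈ Set.Icc a b | ¬ ContinuousWithinAt f (Set.Icc a b) t} with hD
  set ε₁ := ε / (2 * (b - a)) with hε₁def
  have hε₁ : 0 < ε₁ := by apply div_pos hε; linarith
  set η := ε / (4 * (L + 1)) with hηdef
  have hη : 0 < η := by apply div_pos hε; linarith
  obtain ⟨U, hDU, hUopen, hUvol⟩ := Set.exists_isOpen_lt_of_lt D (ENNReal.ofReal η)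
    (by rw [hae]; exact ENNReal.ofReal_pos.mpr hη)
  set K := Set.Icc a b \ U with hK
  have hKcomp : IsCompact K := isCompact_Icc.diff hUopen
  have hcont : ∀ x ∈ K, ∃ r > 0, ∀ y ∈ Set.Icc a b, dist y x < r → dist (f y) (f x) < ε₁/2 := by
    intro x hx
    have hxc : ContinuousWithinAt f (Set.Icc a b) x := by
      by_contra hcon
      exact hx.2 (hDU ⟨hx.1, hcon⟩)
    exact Metric.continuousWithinAt_iff.mp hxc (ε₁/2) (by linarith)
  choose! r hrpos hrball using hcont
  have hcov : K ⊆ ⋃ x ∈ K, Metric.ball x (r x / 2) := by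
    intro x hx
    exact Set.mem_biUnion hx (Metric.mem_ball_self (by have := hrpos x hx; linarith))
  obtain ⟨T, hTK, hTfin, hTcov⟩ := hKcomp.elim_finite_subcover_image
    (fun x _ => Metric.isOpen_ball) hcov
  obtain ⟨δ₀, hδ₀pos, hδ₀⟩ : ∃ δ₀ > 0, ∀ x ∈ T, δ₀ ≤ r x / 6 := by
    rcases Set.eq_empty_or_nonempty T with h | h
    · exact ⟨1, one_pos, by simp [h]⟩
    · have hne : hTfin.toFinset.Nonempty := by
        rwa [Set.Finite.toFinset_nonempty]
      refine ⟨hTfin.toFinset.inf' hne (fun x => r x / 6), ?_, ?_⟩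
      · exact (Finset.lt_inf'_iff hne).mpr (fun x hx => by
          have := hrpos x (hTK (hTfin.mem_toFinset.mp hx))
          linarith)
      · intro x hx
        exact Finset.inf'_le _ (hTfin.mem_toFinset.mpr hx)
  set δ := min δ₀ (1/2) with hδdef
  have hδpos : 0 < δ := lt_min hδ₀pos (by norm_num)
  have hδ1 : δ < 1 := lt_of_le_of_lt (min_le_right _ _) (by norm_num)
  refine ⟨δ, hδpos, ?_⟩
  intro P Q hP hQ
  obtain ⟨u, N, hu, hu0, huN, humem, hmemP, hmemQ⟩ := RP.exists_common P Q
  obtain ⟨gP, hgPsum, hgP⟩ := RP.represent f P u N hu hu0 huN hmemP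
  obtain ⟨gQ, hgQsum, hgQ⟩ := RP.represent f Q u N hu hu0 huN hmemQ
  rw [hgPsum, hgQsum]
  have hcnonneg : ∀ j < N, 0 ≤ u (j+1) - u j := fun j hj => le_of_lt (by linarith [hu j hj])
  have hclt : ∀ j < N, u (j+1) - u j < δ := by
    intro j hj
    obtain ⟨i, hi, _, h1, h2⟩ := hgP j hj
    have := hP i hi
    linarith
  refine le_trans (RP.dist_sum_sum hinv hscale _ _ _ N hcnonneg
    (fun j hj => lt_trans (hclt j hj) hδ1)) ?_
  have htag : ∀ (R : TaggedPartition a b), R.MeshLT δ → ∀ g : ℕ → X,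
      (∀ j < N, ∃ i < R.n, g j = f (R.s i) ∧ R.t i ≤ u j ∧ u (j+1) ≤ R.t (i+1)) →
      ∀ j < N, ∃ p, g j = f p ∧ p ∈ Set.Icc a b ∧ u j - δ ≤ p ∧ p ≤ u (j+1) + δ := by
    intro R hR g hg j hj
    obtain ⟨i, hi, he, h1, h2⟩ := hg j hj
    have hm := R.tag_mem i hi
    have hmesh := hR i hi
    have huj : u j ≤ u (j+1) := le_of_lt (hu j hj)
    refine ⟨R.s i, he, ?_, ?_, ?_⟩
    · have ht1 := RP.t_mem R i (by omega)
      have ht2 := RP.t_mem R (i+1) (by omega)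
      exact ⟨le_trans ht1.1 hm.1, le_trans hm.2 ht2.2⟩
    · linarith [hm.1]
    · linarith [hm.2]
  set Gd : ℕ → Prop := fun j => ∃ z ∈ K, u j - δ ≤ z ∧ z ≤ u (j+1) + δ with hGd
  set good := (Finset.range N).filter (fun j => Gd j) with hgood
  set bad := (Finset.range N).filter (fun j => ¬ Gd j) with hbad
  have hgoodbound : ∀ j ∈ good, dist (gP j) (gQ j) ≤ ε₁ := by
    intro j hj'
    rw [hgood, Finset.mem_filter, Finset.mem_range] at hj'
    obtain ⟨hj, z, hzK, hz1, hz2⟩ := hj'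
    obtain ⟨x, hxT, hxball⟩ : ∃ x ∈ T, z ∈ Metric.ball x (r x / 2) := by
      have := hTcov hzK
      simpa using this
    obtain ⟨p, hep, hpab, hp1, hp2⟩ := htag P hP gP hgP j hj
    obtain ⟨q, heq, hqab, hq1, hq2⟩ := htag Q hQ gQ hgQ j hj
    have hΔ : u (j+1) - u j < δ := hclt j hj
    have hr6 : δ ≤ r x / 6 := le_trans (min_le_left _ _) (hδ₀ x hxT)
    have hzx : dist z x < r x / 2 := by simpa [Metric.mem_ball] using hxball
    rw [Real.dist_eq] at hzx
    have hdistp : dist p x < r x := by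
      rw [Real.dist_eq]
      have h1 : |p - z| ≤ (u (j+1) + δ) - (u j - δ) := abs_sub_le_iff.mpr ⟨by linarith, by linarith⟩
      calc |p - x| ≤ |p - z| + |z - x| := abs_sub_le p z x
      _ < ((u (j+1) + δ) - (u j - δ)) + r x / 2 := by linarith
      _ ≤ r x := by linarith
    have hdistq : dist q x < r x := by
      rw [Real.dist_eq]
      have h1 : |q - z| ≤ (u (j+1) + δ) - (u j - δ) := abs_sub_le_iff.mpr ⟨by linarith, by linarith⟩
      calc |q - x| ≤ |q - z| + |z - x| := abs_sub_le q z x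
      _ < ((u (j+1) + δ) - (u j - δ)) + r x / 2 := by linarith
      _ ≤ r x := by linarith
    have hfp : dist (f p) (f x) < ε₁/2 := hrball x (hTK hxT) p hpab hdistp
    have hfq : dist (f q) (f x) < ε₁/2 := hrball x (hTK hxT) q hqab hdistq
    rw [hep, heq]
    calc dist (f p) (f q) ≤ dist (f p) (f x) + dist (f x) (f q) := dist_triangle _ _ _
    _ = dist (f p) (f x) + dist (f q) (f x) := by rw [dist_comm (f x) (f q)]
    _ ≤ ε₁ := by linarith
  have hbadbound : ∀ j ∈ bad, dist (gP j) (gQ j) ≤ 2 * L := by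
    intro j hj'
    rw [hbad, Finset.mem_filter, Finset.mem_range] at hj'
    obtain ⟨p, hep, hpab, _, _⟩ := htag P hP gP hgP j hj'.1
    obtain ⟨q, heq, hqab, _, _⟩ := htag Q hQ gQ hgQ j hj'.1
    rw [hep, heq]
    calc dist (f p) (f q) ≤ dist (f p) 0 + dist 0 (f q) := dist_triangle _ _ _
    _ ≤ L + L := add_le_add (by rw [dist_comm]; exact hL p hpab) (hL q hqab)
    _ = 2 * L := by ring
  have hbadsub : ∀ j ∈ bad, Set.Ioo (u j) (u (j+1)) ⊆ U := by
    intro j hj' w hw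
    rw [hbad, Finset.mem_filter, Finset.mem_range] at hj'
    by_contra hwU
    apply hj'.2
    have h1 := (humem j (by omega)).1
    have h2 := (humem (j+1) (by omega)).2
    exact ⟨w, ⟨⟨le_trans h1 (le_of_lt hw.1), le_trans (le_of_lt hw.2) h2⟩, hwU⟩,
      by linarith [hw.1], by linarith [hw.2]⟩
  have hmeas : ∑ j ∈ bad, (u (j+1) - u j) ≤ η := by
    have hdisj : (↑bad : Set ℕ).PairwiseDisjoint (fun j => Set.Ioo (u j) (u (j+1))) := by
      intro i hi j hj hij
      rw [Finset.mem_coe, hbad, Finset.mem_filter, Finset.mem_range] at hi hj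
      apply Set.disjoint_left.mpr
      intro w hwi hwj
      rcases Nat.lt_or_ge i j with h | h
      · have hle : u (i+1) ≤ u j := RP.mono_of_lt u N hu (i+1) j (by omega) (by omega)
        have e1 := hwi.2
        have e2 := hwj.1
        linarith [hwi.2, hwj.1]
      · have hji : j < i := by omega
        have hle : u (j+1) ≤ u i := RP.mono_of_lt u N hu (j+1) i (by omega) (by omega)
        linarith [hwj.2, hwi.1]
    have hunion : volume (⋃ j ∈ bad, Set.Ioo (u j) (u (j+1)))
        = ∑ j ∈ bad, volume (Set.Ioo (u j) (u (j+1))) :=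
      measure_biUnion_finset hdisj (fun j _ => measurableSet_Ioo)
    have hsub : (⋃ j ∈ bad, Set.Ioo (u j) (u (j+1))) ⊆ U := Set.iUnion₂_subset hbadsub
    have hle : ∑ j ∈ bad, volume (Set.Ioo (u j) (u (j+1))) ≤ ENNReal.ofReal η := by
      rw [← hunion]
      exact le_trans (measure_mono hsub) (le_of_lt hUvol)
    have heq2 : ∑ j ∈ bad, volume (Set.Ioo (u j) (u (j+1)))
        = ENNReal.ofReal (∑ j ∈ bad, (u (j+1) - u j)) := by
      rw [ENNReal.ofReal_sum_of_nonneg]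
      · exact Finset.sum_congr rfl (fun j _ => Real.volume_Ioo)
      · intro j hj
        rw [hbad, Finset.mem_filter, Finset.mem_range] at hj
        exact hcnonneg j hj.1
    rw [heq2] at hle
    exact (ENNReal.ofReal_le_ofReal_iff (le_of_lt hη)).mp hle
  have hsumtotal : ∑ j ∈ Finset.range N, (u (j+1) - u j) = b - a := by
    rw [Finset.sum_range_sub u, hu0, huN]
  have hba : (0:ℝ) < b - a := by linarith
  have hgoodsum : ∑ j ∈ good, (u (j+1) - u j) * dist (gP j) (gQ j) ≤ ε / 2 := by
    calc ∑ j ∈ good, (u (j+1) - u j) * dist (gP j) (gQ j)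
        ≤ ∑ j ∈ good, (u (j+1) - u j) * ε₁ := by
          apply Finset.sum_le_sum
          intro j hj
          have hjN : j < N := by
            rw [hgood, Finset.mem_filter, Finset.mem_range] at hj
            exact hj.1
          exact mul_le_mul_of_nonneg_left (hgoodbound j hj) (hcnonneg j hjN)
    _ = (∑ j ∈ good, (u (j+1) - u j)) * ε₁ := (Finset.sum_mul _ _ _).symm
    _ ≤ (b - a) * ε₁ := by
          apply mul_le_mul_of_nonneg_right _ (le_of_lt hε₁)
          rw [← hsumtotal]
          apply Finset.sum_le_sum_of_subset_of_nonneg (Finset.filter_subset _ _)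
          intro j hj _
          exact hcnonneg j (Finset.mem_range.mp hj)
    _ = ε / 2 := by
          rw [hε₁def]
          have hne : b - a ≠ 0 := ne_of_gt hba
          field_simp
  have hbadsum : ∑ j ∈ bad, (u (j+1) - u j) * dist (gP j) (gQ j) ≤ ε / 2 := by
    calc ∑ j ∈ bad, (u (j+1) - u j) * dist (gP j) (gQ j)
        ≤ ∑ j ∈ bad, (u (j+1) - u j) * (2*L) := by
          apply Finset.sum_le_sum
          intro j hj
          have hjN : j < N := by
            rw [hbad, Finset.mem_filter, Finset.mem_range] at hj
            exact hj.1
          exact mul_le_mul_of_nonneg_left (hbadbound j hj) (hcnonneg j hjN)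
    _ = (∑ j ∈ bad, (u (j+1) - u j)) * (2*L) := (Finset.sum_mul _ _ _).symm
    _ ≤ η * (2*L) := mul_le_mul_of_nonneg_right hmeas (by linarith)
    _ ≤ ε/2 := by
          rw [hηdef, div_mul_eq_mul_div, div_le_div_iff₀ (by linarith) (by norm_num)]
          nlinarith [mul_nonneg (le_of_lt hε) hL0]
  calc ∑ j ∈ Finset.range N, (u (j+1) - u j) * dist (gP j) (gQ j)
      = (∑ j ∈ good, (u (j+1) - u j) * dist (gP j) (gQ j))
        + (∑ j ∈ bad, (u (j+1) - u j) * dist (gP j) (gQ j)) :=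
        (Finset.sum_filter_add_sum_filter_not (Finset.range N) (fun j => Gd j) _).symm
  _ ≤ ε/2 + ε/2 := add_le_add hgoodsum hbadsum
  _ = ε := by ring

/-- a bounded, almost everywhere continuous function with values
in a vector space with a complete invariant metric satisfying the scaling
inequality is Riemann integrable. -/
theorem riemannIntegrable_of_bounded_ae_continuous
    {X : Type*} [MetricSpace X] [AddCommGroup X] [Module ℝ X] [CompleteSpace X]
    (hinv : ∀ x y z : X, dist (x + z) (y + z) = dist x y)
    (hscale : ∀ l : ℝ, 0 ≤ l → l < 1 → ∀ x y : X, dist (l • x) (l • y) ≤ l * dist x y)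
    (a b : ℝ) (hab : a < b) (f : ℝ → X)
    (hbdd : ∃ L, ∀ t ∈ Set.Icc a b, dist 0 (f t) ≤ L)
    (hae : volume {t ∈ Set.Icc a b | ¬ ContinuousWithinAt f (Set.Icc a b) t} = 0) :
    ∃ x, HasRiemannIntegral f a b x := by
  classical
  have key : ∀ ε : ℝ, 0 < ε → ∃ δ > 0, ∀ P Q : TaggedPartition a b, P.MeshLT δ → Q.MeshLT δ →
      dist (riemannSum f P) (riemannSum f Q) ≤ ε :=
    fun ε hε => RP.cauchy_est hinv hscale hab f hbdd hae ε hε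
  have hek : ∀ k : ℕ, (0:ℝ) < 1/(k+1) := by intro k; positivity
  choose δs hδspos hδs using fun k : ℕ => key (1/(k+1)) (hek k)
  set d : ℕ → ℝ := fun k =>
    min (1/((k:ℝ)+1)) ((Finset.range (k+1)).inf' ⟨0, Finset.mem_range.mpr (by omega)⟩ δs)
    with hd
  have hdpos : ∀ k, 0 < d k := by
    intro k
    apply lt_min (hek k)
    exact (Finset.lt_inf'_iff _).mpr (fun i _ => hδspos i)
  have hdle : ∀ i k, i ≤ k → d k ≤ δs i := by
    intro i k hik
    exact le_trans (min_le_right _ _) (Finset.inf'_le _ (Finset.mem_range.mpr (by omega)))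
  have hdle1 : ∀ k, d k ≤ 1/((k:ℝ)+1) := fun k => min_le_left _ _
  choose Ps hPs using fun k : ℕ => RP.exists_partition hab (d k) (hdpos k)
  set xs : ℕ → X := fun k => riemannSum f (Ps k) with hxs
  have hstep : ∀ k m, k ≤ m → dist (xs k) (xs m) ≤ 1/((k:ℝ)+1) := by
    intro k m hkm
    apply hδs k (Ps k) (Ps m)
    · intro i hi
      exact lt_of_lt_of_le (hPs k i hi) (hdle k k le_rfl)
    · intro i hi
      exact lt_of_lt_of_le (hPs m i hi) (hdle k m hkm)
  have hcauchy : CauchySeq xs := by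
    apply Metric.cauchySeq_iff'.mpr
    intro ε hε
    obtain ⟨k, hk⟩ := exists_nat_one_div_lt hε
    refine ⟨k, fun n hn => ?_⟩
    calc dist (xs n) (xs k) = dist (xs k) (xs n) := dist_comm _ _
    _ ≤ 1/((k:ℝ)+1) := hstep k n hn
    _ < ε := hk
  obtain ⟨x, hx⟩ := cauchySeq_tendsto_of_complete hcauchy
  refine ⟨x, ?_⟩
  intro ε hε
  obtain ⟨δ, hδpos, hδ⟩ := key (ε/3) (by linarith)
  refine ⟨δ, hδpos, ?_⟩
  intro P hP
  obtain ⟨k1, hk1⟩ := exists_nat_one_div_lt hδpos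
  obtain ⟨k2, hk2⟩ := (Metric.tendsto_atTop.mp hx) (ε/3) (by linarith)
  set k := max k1 k2 with hkdef
  have hmeshk : (Ps k).MeshLT δ := by
    intro i hi
    calc (Ps k).t (i+1) - (Ps k).t i < d k := hPs k i hi
    _ ≤ 1/((k:ℝ)+1) := hdle1 k
    _ ≤ 1/((k1:ℝ)+1) := by
        apply one_div_le_one_div_of_le (by positivity)
        have : (k1:ℝ) ≤ (k:ℝ) := by exact_mod_cast le_max_left k1 k2
        linarith
    _ < δ := hk1
  have h1 : dist (riemannSum f P) (xs k) ≤ ε/3 := hδ P (Ps k) hP hmeshk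
  have h2 : dist (xs k) x < ε/3 := hk2 k (le_max_right _ _)
  calc dist (riemannSum f P) x ≤ dist (riemannSum f P) (xs k) + dist (xs k) x :=
      dist_triangle _ _ _
  _ < ε := by linarith
end

section
/- The function f : [0,1] → ℓᵖ (1 < p < ∞) defined by f(t) = 0 if t is irrational and f(rₙ) = eₙ for an enumeration (rₙ) of the rationals in [0,1] (eₙ the n-th standard unit vector) is Riemann integrable on [0,1] with integral 0, but f is discontinuous at every irrational point of [0,1]; hence ℓᵖ (1 < p < ∞) does not have the Lebesgue property. -/
open Set MeasureTheory

/-- A metric vector space `Z` has the Lebesgue property: every Riemann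
integrable function `[a,b] → Z` is continuous almost everywhere. -/
def LebesgueProperty (Z : Type*) [MetricSpace Z] [AddCommGroup Z] [Module ℝ Z] : Prop :=
  ∀ (a b : ℝ), a < b → ∀ f : ℝ → Z, (∃ x, HasRiemannIntegral f a b x) →
    volume {t ∈ Set.Icc a b | ¬ ContinuousWithinAt f (Set.Icc a b) t} = 0

lemma TaggedPartition.t_lt {a b : ℝ} (P : TaggedPartition a b) :
    ∀ {j i : ℕ}, i < j → j ≤ P.n → P.t i < P.t j := by
  intro j
  induction j with
  | zero => omega
  | succ k ih =>
    intro i hij hjn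
    have hk : P.t k < P.t (k + 1) := P.mono k (by omega)
    rcases Nat.lt_or_ge i k with h | h
    · exact (ih h (by omega)).trans hk
    · have : i = k := by omega
      subst this; exact hk

lemma TaggedPartition.t_le {a b : ℝ} (P : TaggedPartition a b) {i j : ℕ}
    (hij : i ≤ j) (hjn : j ≤ P.n) : P.t i ≤ P.t j := by
  rcases eq_or_lt_of_le hij with rfl | h
  · exact le_refl _
  · exact (P.t_lt h hjn).le

lemma lp_aux_norm (p : ENNReal) [Fact (1 ≤ p)] (hpr : 1 < p.toReal)
    (E : Finset ℕ) (m : ℕ → ℕ) (hm : Set.InjOn m E) (w : ℕ → ℝ)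
    (hw0 : ∀ i ∈ E, 0 ≤ w i) {δ : ℝ} (hδ : 0 < δ) (hwδ : ∀ i ∈ E, w i ≤ δ)
    (hsum : ∑ i ∈ E, w i ≤ 1) :
    ‖∑ i ∈ E, w i • lp.single (E := fun _ : ℕ => ℝ) p (m i) (1 : ℝ)‖ ≤ δ ^ ((p.toReal - 1) / p.toReal) := by
  have hpr0 : 0 < p.toReal := by linarith
  set pr := p.toReal with hprdef
  set h : ℕ → ℝ := fun k => ∑ i ∈ E.filter (fun i => m i = k), w i with hh
  have hkey : ∀ i ∈ E, h (m i) = w i := by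
    intro i hi
    have : E.filter (fun j => m j = m i) = {i} := by
      ext j
      simp only [Finset.mem_filter, Finset.mem_singleton]
      constructor
      · rintro ⟨hj, hji⟩; exact hm hj hi hji
      · rintro rfl; exact ⟨hi, rfl⟩
    simp [hh, this]
  have hinj : ∀ x ∈ E, ∀ y ∈ E, m x = m y → x = y := fun x hx y hy hxy => hm hx hy hxy
  have hrw : ∑ i ∈ E, w i • lp.single (E := fun _ : ℕ => ℝ) p (m i) (1 : ℝ)
      = ∑ k ∈ E.image m, lp.single (E := fun _ : ℕ => ℝ) p k (h k) := by
    rw [Finset.sum_image hinj]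
    refine Finset.sum_congr rfl fun i hi => ?_
    rw [hkey i hi, ← lp.single_smul, smul_eq_mul, mul_one]
  rw [hrw]
  have hns := lp.norm_sum_single (E := fun _ : ℕ => ℝ) hpr0 h (E.image m)
  have hrhs : ∑ k ∈ E.image m, ‖h k‖ ^ pr = ∑ i ∈ E, ‖w i‖ ^ pr := by
    rw [Finset.sum_image hinj]
    exact Finset.sum_congr rfl fun i hi => by rw [hkey i hi]
  have hbound : ∑ i ∈ E, ‖w i‖ ^ pr ≤ δ ^ (pr - 1) := by
    have hstep : ∀ i ∈ E, ‖w i‖ ^ pr ≤ w i * δ ^ (pr - 1) := by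
      intro i hi
      have h0 := hw0 i hi
      rw [Real.norm_of_nonneg h0]
      have : w i ^ pr = w i ^ (1 : ℝ) * w i ^ (pr - 1) := by
        rw [← Real.rpow_add' h0 (by norm_num; linarith)]
        ring_nf
      rw [this, Real.rpow_one]
      exact mul_le_mul_of_nonneg_left
        (Real.rpow_le_rpow h0 (hwδ i hi) (by linarith)) h0
    calc ∑ i ∈ E, ‖w i‖ ^ pr ≤ ∑ i ∈ E, w i * δ ^ (pr - 1) :=
          Finset.sum_le_sum hstep
      _ = (∑ i ∈ E, w i) * δ ^ (pr - 1) := by rw [← Finset.sum_mul]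
      _ ≤ 1 * δ ^ (pr - 1) :=
          mul_le_mul_of_nonneg_right hsum (Real.rpow_nonneg hδ.le _)
      _ = δ ^ (pr - 1) := one_mul _
  have hnormpow : ‖∑ k ∈ E.image m, lp.single (E := fun _ : ℕ => ℝ) p k (h k)‖ ^ pr ≤ δ ^ (pr - 1) := by
    rw [hns, hrhs]; exact hbound
  have hN : (0 : ℝ) ≤ ‖∑ k ∈ E.image m, lp.single (E := fun _ : ℕ => ℝ) p k (h k)‖ := norm_nonneg _
  have := Real.rpow_le_rpow (by positivity) hnormpow (by positivity : (0:ℝ) ≤ 1 / pr)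
  rwa [← Real.rpow_mul hN, mul_one_div, div_self hpr0.ne', Real.rpow_one,
    ← Real.rpow_mul hδ.le, mul_one_div] at this

/-- the Dirichlet-type function into `ℓᵖ` (`1 < p < ∞`) sending
irrationals to `0` and the `n`-th rational `rₙ` to `eₙ` is Riemann integrable
with integral `0` but discontinuous at every irrational; hence `ℓᵖ` does not
have the Lebesgue property. -/
theorem lp_not_lebesgueProperty (p : ENNReal) [Fact (1 ≤ p)] (hp1 : 1 < p) (hpt : p < ⊤)
    (r : ℕ → ℝ) (hr : Function.Injective r)
    (hrange : Set.range r = {t ∈ Set.Icc (0 : ℝ) 1 | ∃ q : ℚ, (q : ℝ) = t})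
    (f : ℝ → lp (fun _ : ℕ => ℝ) p)
    (hf0 : ∀ t ∈ Set.Icc (0 : ℝ) 1, Irrational t → f t = 0)
    (hfr : ∀ n : ℕ, f (r n) = lp.single p n 1) :
    HasRiemannIntegral f 0 1 0 ∧
      (∀ t ∈ Set.Icc (0 : ℝ) 1, Irrational t →
        ¬ ContinuousWithinAt f (Set.Icc (0 : ℝ) 1) t) ∧
      ¬ LebesgueProperty (lp (fun _ : ℕ => ℝ) p) := by
  classical
  have hpr : 1 < p.toReal := by
    have := (ENNReal.toReal_lt_toReal ENNReal.one_ne_top hpt.ne).mpr hp1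
    simpa using this
  have hpr0 : 0 < p.toReal := by linarith
  -- Part 1: Riemann integrable with integral 0
  have part1 : HasRiemannIntegral f 0 1 0 := by
    intro ε hε
    set c := (p.toReal - 1) / p.toReal with hc
    have hc0 : 0 < c := div_pos (by linarith) hpr0
    set δ := ((ε / 2) ^ (1 / c)) / 2 with hδdef
    have hδ0 : 0 < δ := by positivity
    have hδc : 2 * δ ^ c < ε := by
      have h1 : δ < (ε / 2) ^ (1 / c) := by
        rw [hδdef]
        have : (0:ℝ) < (ε / 2) ^ (1 / c) := by positivity
        linarith
      have h2 : δ ^ c < ((ε / 2) ^ (1 / c)) ^ c :=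
        Real.rpow_lt_rpow hδ0.le h1 hc0
      have h3 : ((ε / 2) ^ (1 / c)) ^ c = ε / 2 := by
        rw [← Real.rpow_mul (by positivity), one_div, inv_mul_cancel₀ hc0.ne',
          Real.rpow_one]
      rw [h3] at h2; linarith
    refine ⟨δ, hδ0, fun P hP => ?_⟩
    set w : ℕ → ℝ := fun i => P.t (i + 1) - P.t i with hw
    have hw0 : ∀ i < P.n, 0 ≤ w i := fun i hi => by
      have := P.mono i hi; simp [hw]; linarith
    have hwδ : ∀ i < P.n, w i ≤ δ := fun i hi => (hP i hi).le
    have hsumw : ∑ i ∈ Finset.range P.n, w i = 1 := by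
      rw [hw]
      rw [Finset.sum_range_sub (f := P.t), P.left, P.right]
      ring
    have hsmem : ∀ i < P.n, P.s i ∈ Set.Icc (0 : ℝ) 1 := by
      intro i hi
      obtain ⟨h1, h2⟩ := P.tag_mem i hi
      constructor
      · calc (0:ℝ) = P.t 0 := P.left.symm
          _ ≤ P.t i := P.t_le (Nat.zero_le i) (by omega)
          _ ≤ P.s i := h1
      · calc P.s i ≤ P.t (i + 1) := h2
          _ ≤ P.t P.n := P.t_le (by omega) le_rfl
          _ = 1 := P.right
    set E := (Finset.range P.n).filter (fun i => ∃ k, r k = P.s i) with hE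
    have hmE : ∀ i, ∃ k, i ∈ E → r k = P.s i := by
      intro i
      by_cases hi : i ∈ E
      · obtain ⟨k, hk⟩ := (Finset.mem_filter.mp hi).2
        exact ⟨k, fun _ => hk⟩
      · exact ⟨0, fun h => absurd h hi⟩
    choose m hm using hmE
    have hEsub : E ⊆ Finset.range P.n := Finset.filter_subset _ _
    have hfsE : ∀ i ∈ E, f (P.s i) = lp.single (E := fun _ : ℕ => ℝ) p (m i) 1 := by
      intro i hi
      rw [← hm i hi, hfr]
    have hrs : riemannSum f P = ∑ i ∈ E, w i • lp.single (E := fun _ : ℕ => ℝ) p (m i) (1:ℝ) := by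
      rw [riemannSum, ← Finset.sum_subset hEsub]
      · exact Finset.sum_congr rfl fun i hi => by rw [hfsE i hi]
      · intro i hi hiE
        have hin : i < P.n := Finset.mem_range.mp hi
        have hirr : Irrational (P.s i) := by
          rw [Irrational]
          intro hmem
          obtain ⟨q, hq⟩ := hmem
          have : P.s i ∈ Set.range r := by
            rw [hrange]; exact ⟨hsmem i hin, q, hq⟩
          obtain ⟨k, hk⟩ := this
          exact hiE (Finset.mem_filter.mpr ⟨hi, k, hk⟩)
        rw [hf0 _ (hsmem i hin) hirr, smul_zero]
    -- key adjacency claim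
    have hadj : ∀ i ∈ E, ∀ j ∈ E, i < j → m i = m j → j = i + 1 := by
      intro i hi j hj hij hmij
      have hsij : P.s i = P.s j := by rw [← hm i hi, ← hm j hj, hmij]
      have hin : i < P.n := Finset.mem_range.mp (hEsub hi)
      have hjn : j < P.n := Finset.mem_range.mp (hEsub hj)
      have h1 : P.s i ≤ P.t (i + 1) := (P.tag_mem i hin).2
      have h2 : P.t j ≤ P.s j := (P.tag_mem j hjn).1
      have h3 : P.t (i + 1) ≤ P.t j := P.t_le (by omega) (by omega)
      by_contra hne
      have : i + 1 < j := by omega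
      have := P.t_lt this (by omega)
      rw [hsij] at h1
      linarith
    have hbnd : ∀ (F : Finset ℕ), F ⊆ E → (∀ k ∈ F, k + 1 ∉ F) →
        ‖∑ i ∈ F, w i • lp.single (E := fun _ : ℕ => ℝ) p (m i) (1:ℝ)‖ ≤ δ ^ c := by
      intro F hFE hF
      have hinjOn : Set.InjOn m F := by
        intro x hx y hy hxy
        simp only [Finset.mem_coe] at hx hy
        by_contra hne
        rcases lt_or_gt_of_ne hne with h | h
        · have := hadj x (hFE hx) y (hFE hy) h hxy
          exact hF x hx (this ▸ hy)
        · have := hadj y (hFE hy) x (hFE hx) h hxy.symm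
          exact hF y hy (this ▸ hx)
      refine lp_aux_norm p hpr _ m hinjOn w
        (fun i hi => hw0 i (Finset.mem_range.mp (hEsub (hFE hi))))
        hδ0
        (fun i hi => hwδ i (Finset.mem_range.mp (hEsub (hFE hi))))
        ?_
      calc ∑ i ∈ F, w i ≤ ∑ i ∈ Finset.range P.n, w i := by
            refine Finset.sum_le_sum_of_subset_of_nonneg
              (fun i hi => hEsub (hFE hi)) ?_
            intro i hi _
            exact hw0 i (Finset.mem_range.mp hi)
        _ = 1 := hsumw
    have hsplit : ∑ i ∈ E, w i • lp.single (E := fun _ : ℕ => ℝ) p (m i) (1:ℝ)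
        = (∑ i ∈ E.filter (fun i => Even i), w i • lp.single (E := fun _ : ℕ => ℝ) p (m i) (1:ℝ))
          + ∑ i ∈ E.filter (fun i => ¬ Even i), w i • lp.single (E := fun _ : ℕ => ℝ) p (m i) (1:ℝ) :=
      (Finset.sum_filter_add_sum_filter_not E _ _).symm
    rw [dist_zero_right, hrs, hsplit]
    have he := hbnd (E.filter (fun i => Even i)) (Finset.filter_subset _ _)
      (by
        intro k hk hk1
        have h1 := (Finset.mem_filter.mp hk).2
        have h2 := (Finset.mem_filter.mp hk1).2
        rw [Nat.even_add_one] at h2; exact h2 h1)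
    have ho := hbnd (E.filter (fun i => ¬ Even i)) (Finset.filter_subset _ _)
      (by
        intro k hk hk1
        have h1 := (Finset.mem_filter.mp hk).2
        have h2 := (Finset.mem_filter.mp hk1).2
        rw [Nat.even_add_one] at h2; exact h1 (not_not.mp h2))
    calc ‖_ + _‖ ≤ δ ^ c + δ ^ c := (norm_add_le _ _).trans (add_le_add he ho)
      _ = 2 * δ ^ c := by ring
      _ < ε := hδc
  -- Part 2: discontinuity at irrationals
  have part2 : ∀ t ∈ Set.Icc (0:ℝ) 1, Irrational t →
      ¬ ContinuousWithinAt f (Set.Icc (0:ℝ) 1) t := by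
    intro t ht hirr hcont
    have hft : f t = 0 := hf0 t ht hirr
    have hmem : f ⁻¹' Metric.ball 0 1 ∈ nhdsWithin t (Set.Icc (0:ℝ) 1) := by
      apply hcont
      rw [hft]
      exact Metric.ball_mem_nhds _ one_pos
    obtain ⟨U, hUo, htU, hUsub⟩ := mem_nhdsWithin.mp hmem
    have ht01 : t ∈ Set.Ioo (0:ℝ) 1 := by
      obtain ⟨h0, h1⟩ := ht
      constructor
      · rcases eq_or_lt_of_le h0 with h | h
        · exact absurd ⟨0, by exact_mod_cast h⟩ hirr
        · exact h
      · rcases eq_or_lt_of_le h1 with h | h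
        · exact absurd ⟨1, by exact_mod_cast h.symm⟩ hirr
        · exact h
    have hopen : IsOpen (U ∩ Set.Ioo (0:ℝ) 1) := hUo.inter isOpen_Ioo
    have hne : (U ∩ Set.Ioo (0:ℝ) 1).Nonempty := ⟨t, htU, ht01⟩
    have hdense : Dense (Set.range ((↑) : ℚ → ℝ)) := Rat.denseRange_cast
    obtain ⟨x, hxrat, hxU, hxIoo⟩ := hdense.exists_mem_open hopen hne
    have hxIcc : x ∈ Set.Icc (0:ℝ) 1 := Set.Ioo_subset_Icc_self hxIoo
    have hxr : x ∈ Set.range r := by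
      rw [hrange]
      obtain ⟨q, hq⟩ := hxrat
      exact ⟨hxIcc, q, hq⟩
    obtain ⟨k, hk⟩ := hxr
    have hfx : f x = lp.single (E := fun _ : ℕ => ℝ) p k 1 := by rw [← hk, hfr]
    have hball : f x ∈ Metric.ball (0 : lp (fun _ : ℕ => ℝ) p) 1 :=
      hUsub ⟨hxU, hxIcc⟩
    rw [Metric.mem_ball, dist_zero_right, hfx] at hball
    have : ‖lp.single (E := fun _ : ℕ => ℝ) p k (1:ℝ)‖ = 1 := by
      have := lp.norm_single (E := fun _ : ℕ => ℝ) (zero_lt_one.trans hp1) k (1:ℝ)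
      simpa using this
    rw [this] at hball
    exact lt_irrefl _ hball
  refine ⟨part1, part2, ?_⟩
  -- Part 3
  intro hL
  have h0 := hL 0 1 one_pos f ⟨0, part1⟩
  have hsub : {t ∈ Set.Icc (0:ℝ) 1 | Irrational t}
      ⊆ {t ∈ Set.Icc (0:ℝ) 1 | ¬ ContinuousWithinAt f (Set.Icc (0:ℝ) 1) t} := by
    rintro t ⟨ht, hi⟩
    exact ⟨ht, part2 t ht hi⟩
  have h1 : volume {t ∈ Set.Icc (0:ℝ) 1 | Irrational t} = 0 :=
    le_antisymm (h0 ▸ measure_mono hsub) zero_le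
  have h2 : volume (Set.range ((↑) : ℚ → ℝ)) = 0 :=
    (Set.countable_range _).measure_zero _
  have h3 : Set.Icc (0:ℝ) 1 ⊆
      {t ∈ Set.Icc (0:ℝ) 1 | Irrational t} ∪ Set.range ((↑) : ℚ → ℝ) := by
    intro x hx
    by_cases h : x ∈ Set.range ((↑) : ℚ → ℝ)
    · exact Or.inr h
    · exact Or.inl ⟨hx, h⟩
  have hvol : volume (Set.Icc (0:ℝ) 1) = 1 := by
    rw [Real.volume_Icc]; norm_num
  have : (1 : ENNReal) ≤ 0 := by
    calc (1 : ENNReal) = volume (Set.Icc (0:ℝ) 1) := hvol.symm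
      _ ≤ volume ({t ∈ Set.Icc (0:ℝ) 1 | Irrational t} ∪ Set.range ((↑) : ℚ → ℝ)) :=
          measure_mono h3
      _ ≤ volume {t ∈ Set.Icc (0:ℝ) 1 | Irrational t}
          + volume (Set.range ((↑) : ℚ → ℝ)) := measure_union_le _ _
      _ = 0 := by rw [h1, h2, add_zero]
  simp at this
end

section
/- Let ℝ^ω be the countable product of copies of ℝ with the product topology, metrized by the complete invariant metric d(x,y) = Σᵢ min{|xᵢ − yᵢ|, 1}/2ⁱ. Then ℝ^ω has the Lebesgue property: every function f : [a,b] → ℝ^ω that is Riemann integrable with respect to d is continuous almost everywhere on [a,b]. -/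
open Set MeasureTheory

/-- The product metric on `ℝ^ω = ℕ → ℝ`: `d(x,y) = Σ_{i≥1} min{|xᵢ−yᵢ|,1}/2ⁱ`
(indices shifted so that `ℕ` starts at `0`). It induces the product topology. -/
noncomputable def dOmega (x y : ℕ → ℝ) : ℝ :=
  ∑' i : ℕ, min |x i - y i| 1 / 2 ^ (i + 1)

/-- Riemann integrability in `(ℝ^ω, dOmega)`. -/
def HasRiemannIntegralD (f : ℝ → ℕ → ℝ) (a b : ℝ) (x : ℕ → ℝ) : Prop :=
  ∀ ε > 0, ∃ δ > 0, ∀ P : TaggedPartition a b, P.MeshLT δ →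
    dOmega (riemannSum f P) x < ε

/-- Continuity at `t` within `S` with respect to `dOmega`. -/
def ContinuousWithinAtD (f : ℝ → ℕ → ℝ) (S : Set ℝ) (t : ℝ) : Prop :=
  ∀ ε > 0, ∃ δ > 0, ∀ s ∈ S, |s - t| < δ → dOmega (f s) (f t) < ε

set_option maxHeartbeats 1000000

noncomputable def unifT (a b : ℝ) (n : ℕ) (i : ℕ) : ℝ := a + (b - a) * i / n

lemma unifT_zero (a b : ℝ) (n : ℕ) : unifT a b n 0 = a := by simp [unifT]

lemma unifT_last (a b : ℝ) {n : ℕ} (hn : 0 < n) : unifT a b n n = b := by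
  have : (n:ℝ) ≠ 0 := Nat.cast_ne_zero.mpr hn.ne'
  rw [unifT, mul_div_assoc, div_self this]; ring

lemma unifT_step (a b : ℝ) {n : ℕ} (hn : 0 < n) (i : ℕ) :
    unifT a b n (i + 1) - unifT a b n i = (b - a) / n := by
  have : (n:ℝ) ≠ 0 := Nat.cast_ne_zero.mpr hn.ne'
  unfold unifT; push_cast; ring

lemma unifT_lt_succ {a b : ℝ} (hab : a < b) {n : ℕ} (hn : 0 < n) (i : ℕ) :
    unifT a b n i < unifT a b n (i + 1) := by
  have h := unifT_step a b hn i
  have : (0:ℝ) < (b - a) / n := div_pos (sub_pos.2 hab) (Nat.cast_pos.2 hn)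
  linarith

noncomputable def unifP (a b : ℝ) (hab : a < b) (n : ℕ) (hn : 0 < n)
    (s : ℕ → ℝ) (hs : ∀ i < n, s i ∈ Set.Icc (unifT a b n i) (unifT a b n (i + 1))) :
    TaggedPartition a b :=
  ⟨n, unifT a b n, s, hn, unifT_zero a b n, unifT_last a b hn,
    fun i _ => unifT_lt_succ hab hn i, hs⟩

lemma unifT_locate {a b : ℝ} (hab : a < b) {n : ℕ} (hn : 0 < n) {x : ℝ}
    (hx : x ∈ Set.Icc a b) (hnp : ∀ i ≤ n, unifT a b n i ≠ x) :
    ∃ i < n, x ∈ Set.Ioo (unifT a b n i) (unifT a b n (i + 1)) := by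
  classical
  set T := unifT a b n with hT
  set P : ℕ → Prop := fun j => T j ≤ x with hP
  have hP0 : P 0 := by simp [hP, hT, unifT_zero a b n, hx.1]
  set i := Nat.findGreatest P n with hi
  have hile : i ≤ n := Nat.findGreatest_le n
  have hPi : P i := Nat.findGreatest_spec (Nat.zero_le n) hP0
  have hTi : T i < x := lt_of_le_of_ne hPi (hnp i hile)
  have hiltn : i < n := by
    rcases lt_or_eq_of_le hile with h | h
    · exact h
    · exfalso; rw [h] at hTi; rw [hT, unifT_last a b hn] at hTi
      exact absurd hx.2 (not_le.2 hTi)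
  refine ⟨i, hiltn, hTi, ?_⟩
  by_contra hle
  push_neg at hle
  have : P (i + 1) := hle
  exact Nat.findGreatest_is_greatest (Nat.lt_succ_self _) (by omega) this

/-- The set of points where `g` oscillates by at least `c`. -/
def Dset (g : ℝ → ℝ) (a b c : ℝ) : Set ℝ :=
  {t ∈ Set.Icc a b | ∀ δ > 0, ∃ s ∈ Set.Icc a b, ∃ s' ∈ Set.Icc a b,
      |s - t| < δ ∧ |s' - t| < δ ∧ c ≤ |g s - g s'|}

lemma exists_pair {g : ℝ → ℝ} {a b c t : ℝ} (hD : t ∈ Dset g a b c) {l r : ℝ}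
    (hl : l < t) (hr : t < r) :
    ∃ s ∈ Set.Icc l r, ∃ s' ∈ Set.Icc l r, c ≤ g s - g s' := by
  obtain ⟨s, hs, s', hs', h1, h2, h3⟩ := hD.2 (min (t - l) (r - t))
    (lt_min (sub_pos.2 hl) (sub_pos.2 hr))
  have hmem : ∀ u : ℝ, |u - t| < min (t - l) (r - t) → u ∈ Set.Icc l r := by
    intro u hu
    rw [abs_lt] at hu
    have h4 := hu.1
    have h5 := hu.2
    have h6 : min (t - l) (r - t) ≤ t - l := min_le_left _ _
    have h7 : min (t - l) (r - t) ≤ r - t := min_le_right _ _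
    constructor <;> nlinarith
  rcases le_total (g s') (g s) with h | h
  · exact ⟨s, hmem s h1, s', hmem s' h2, by rwa [abs_of_nonneg (sub_nonneg.2 h)] at h3⟩
  · refine ⟨s', hmem s' h2, s, hmem s h1, ?_⟩
    rw [abs_sub_comm, abs_of_nonneg (sub_nonneg.2 h)] at h3
    exact h3

lemma Dset_null {g : ℝ → ℝ} {a b : ℝ} (hab : a < b) {c : ℝ} (hc : 0 < c) {xg : ℝ}
    (hg : ∀ ε > 0, ∃ δ > 0, ∀ P : TaggedPartition a b, P.MeshLT δ →
      |riemannSum g P - xg| < ε) :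
    volume (Dset g a b c) = 0 := by
  classical
  have key : ∀ ε > 0, volume (Dset g a b c) ≤ ENNReal.ofReal ε := by
    intro ε hε
    obtain ⟨δ, hδ, hP⟩ := hg (c * ε / 2) (by positivity)
    obtain ⟨n, hn⟩ := exists_nat_gt ((b - a) / δ)
    have hn0 : 0 < n := by
      have : (0:ℝ) < (b - a) / δ := div_pos (sub_pos.2 hab) hδ
      exact_mod_cast Nat.cast_pos.1 (this.trans hn)
    set T := unifT a b n with hTdef
    have hstep : ∀ i, T (i + 1) - T i = (b - a) / n := fun i => unifT_step a b hn0 i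
    have hnpos : (0:ℝ) < n := Nat.cast_pos.2 hn0
    have hmesh : (b - a) / n < δ := by
      rw [div_lt_iff₀ hnpos]
      rw [div_lt_iff₀ hδ] at hn
      linarith [hn]
    set D := Dset g a b c with hDdef
    -- choose tags
    have H : ∀ i : ℕ, ∃ uv : ℝ × ℝ, i < n →
        uv.1 ∈ Set.Icc (T i) (T (i + 1)) ∧ uv.2 ∈ Set.Icc (T i) (T (i + 1)) ∧
        ((Set.Ioo (T i) (T (i + 1)) ∩ D).Nonempty → c ≤ g uv.1 - g uv.2) ∧
        (¬ (Set.Ioo (T i) (T (i + 1)) ∩ D).Nonempty → uv.1 = uv.2) := by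
      intro i
      by_cases hi : i < n
      · by_cases hne : (Set.Ioo (T i) (T (i + 1)) ∩ D).Nonempty
        · obtain ⟨t0, ht0I, ht0D⟩ := hne
          obtain ⟨u, hu, v, hv, hcuv⟩ := exists_pair ht0D ht0I.1 ht0I.2
          exact ⟨(u, v), fun _ => ⟨hu, hv, fun _ => hcuv, fun h => absurd ⟨t0, ht0I, ht0D⟩ h⟩⟩
        · refine ⟨(T i, T i), fun _ => ⟨?_, ?_, fun h => absurd h hne, fun _ => rfl⟩⟩ <;>
            exact ⟨le_refl _, (unifT_lt_succ hab hn0 i).le⟩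
      · exact ⟨(0, 0), fun h => absurd h hi⟩
    choose w hw using H
    set u : ℕ → ℝ := fun i => (w i).1 with hu
    set v : ℕ → ℝ := fun i => (w i).2 with hv
    set P1 := unifP a b hab n hn0 u (fun i hi => ((hw i) hi).1) with hP1
    set P2 := unifP a b hab n hn0 v (fun i hi => ((hw i) hi).2.1) with hP2
    have hm1 : P1.MeshLT δ := fun i _ => by
      show T (i+1) - T i < δ
      rw [hstep]; exact hmesh
    have hm2 : P2.MeshLT δ := fun i _ => by
      show T (i+1) - T i < δ
      rw [hstep]; exact hmesh
    have hS1 := hP P1 hm1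
    have hS2 := hP P2 hm2
    have hdiff : riemannSum g P1 - riemannSum g P2 =
        ∑ i ∈ Finset.range n, (T (i + 1) - T i) * (g (u i) - g (v i)) := by
      have e1 : riemannSum g P1 = ∑ i ∈ Finset.range n, (T (i + 1) - T i) • g (u i) := rfl
      have e2 : riemannSum g P2 = ∑ i ∈ Finset.range n, (T (i + 1) - T i) • g (v i) := rfl
      rw [e1, e2, ← Finset.sum_sub_distrib]
      refine Finset.sum_congr rfl fun i _ => ?_
      simp [smul_eq_mul, mul_sub]
    set I := (Finset.range n).filter
        (fun i => (Set.Ioo (T i) (T (i + 1)) ∩ D).Nonempty) with hI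
    have hlow : c * ∑ i ∈ I, (T (i + 1) - T i) ≤ riemannSum g P1 - riemannSum g P2 := by
      rw [hdiff, Finset.mul_sum]
      rw [← Finset.sum_filter_add_sum_filter_not (Finset.range n)
        (fun i => (Set.Ioo (T i) (T (i + 1)) ∩ D).Nonempty)]
      have hz : ∑ i ∈ (Finset.range n).filter
          (fun i => ¬ (Set.Ioo (T i) (T (i + 1)) ∩ D).Nonempty),
          (T (i + 1) - T i) * (g (u i) - g (v i)) = 0 := by
        refine Finset.sum_eq_zero fun i hi => ?_
        rw [Finset.mem_filter] at hi
        have heq := ((hw i) (Finset.mem_range.1 hi.1)).2.2.2 hi.2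
        have : g (u i) - g (v i) = 0 := by
          show g (w i).1 - g (w i).2 = 0
          rw [heq]; ring
        rw [this, mul_zero]
      rw [hz, add_zero]
      refine Finset.sum_le_sum fun i hi => ?_
      rw [hI, Finset.mem_filter] at hi
      have hcle := ((hw i) (Finset.mem_range.1 hi.1)).2.2.1 hi.2
      have hΔ : (0:ℝ) ≤ T (i + 1) - T i := by
        rw [hstep]; exact (div_pos (sub_pos.2 hab) hnpos).le
      calc c * (T (i + 1) - T i) = (T (i + 1) - T i) * c := mul_comm _ _
        _ ≤ (T (i + 1) - T i) * (g (u i) - g (v i)) :=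
            mul_le_mul_of_nonneg_left hcle hΔ
    have hsum : ∑ i ∈ I, (T (i + 1) - T i) < ε := by
      have ha1 := abs_lt.1 hS1
      have ha2 := abs_lt.1 hS2
      have h1 : riemannSum g P1 - riemannSum g P2 < c * ε := by linarith
      exact (mul_lt_mul_iff_right₀ hc).1 (hlow.trans_lt h1)
    -- covering
    have hcover : D ⊆ (⋃ i ∈ Finset.range (n + 1), {T i}) ∪
        ⋃ i ∈ I, Set.Icc (T i) (T (i + 1)) := by
      intro x hx
      by_cases hpt : ∃ i ≤ n, T i = x
      · left
        obtain ⟨i, hi, hTi⟩ := hpt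
        exact Set.mem_biUnion (Finset.mem_range.2 (Nat.lt_succ_of_le hi))
          (Set.mem_singleton_iff.2 hTi.symm)
      · right
        push_neg at hpt
        obtain ⟨i, hi, hxI⟩ := unifT_locate hab hn0 hx.1 hpt
        refine Set.mem_biUnion ?_ (Set.Ioo_subset_Icc_self hxI)
        exact Finset.mem_filter.mpr ⟨Finset.mem_range.2 hi, ⟨x, hxI, hx⟩⟩
    have hvol : volume D ≤ ENNReal.ofReal ε := by
      refine (measure_mono hcover).trans ?_
      refine (measure_union_le _ _).trans ?_
      have hA : volume (⋃ i ∈ Finset.range (n + 1), ({T i} : Set ℝ)) = 0 := by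
        refine Set.Finite.measure_zero ?_ _
        exact Set.Finite.biUnion (Finset.range (n + 1)).finite_toSet
          (fun i _ => Set.finite_singleton _)
      rw [hA, zero_add]
      refine (measure_biUnion_finset_le I _).trans ?_
      have : ∀ i ∈ I, volume (Set.Icc (T i) (T (i + 1))) =
          ENNReal.ofReal (T (i + 1) - T i) := fun i _ => Real.volume_Icc
      rw [Finset.sum_congr rfl this]
      rw [← ENNReal.ofReal_sum_of_nonneg
        (fun i _ => by rw [hstep]; exact (div_pos (sub_pos.2 hab) hnpos).le)]
      exact ENNReal.ofReal_le_ofReal hsum.le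
    exact hvol
  refine le_antisymm ?_ (zero_le)
  refine ENNReal.le_of_forall_pos_le_add fun ε' hε' _ => ?_
  have := key ε' (by exact_mod_cast hε')
  rw [ENNReal.ofReal_coe_nnreal] at this
  simpa using this

lemma dterm_nonneg (x y : ℕ → ℝ) (i : ℕ) : 0 ≤ min |x i - y i| 1 / 2 ^ (i + 1) :=
  div_nonneg (le_min (abs_nonneg _) zero_le_one) (by positivity)

lemma dterm_le (x y : ℕ → ℝ) (i : ℕ) :
    min |x i - y i| 1 / 2 ^ (i + 1) ≤ (1/2:ℝ) ^ (i + 1) := by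
  rw [one_div, inv_pow]
  rw [div_eq_mul_inv]
  have h1 : min |x i - y i| 1 ≤ 1 := min_le_right _ _
  have h2 : (0:ℝ) < (2:ℝ) ^ (i+1) := by positivity
  calc min |x i - y i| 1 * ((2:ℝ) ^ (i+1))⁻¹ ≤ 1 * ((2:ℝ) ^ (i+1))⁻¹ := by
        gcongr
    _ = ((2:ℝ) ^ (i+1))⁻¹ := one_mul _

lemma half_pow_summable : Summable (fun i : ℕ => (1/2:ℝ) ^ (i + 1)) :=
  (summable_nat_add_iff 1).2 summable_geometric_two

lemma dOmega_summable (x y : ℕ → ℝ) :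
    Summable (fun i => min |x i - y i| 1 / 2 ^ (i + 1)) :=
  Summable.of_nonneg_of_le (dterm_nonneg x y) (dterm_le x y) half_pow_summable

lemma coord_le_dOmega (x y : ℕ → ℝ) (i : ℕ) :
    min |x i - y i| 1 / 2 ^ (i + 1) ≤ dOmega x y :=
  Summable.le_tsum (dOmega_summable x y) i (fun j _ => dterm_nonneg x y j)

lemma sum_halves_le (N : ℕ) : ∑ i ∈ Finset.range N, (1/2:ℝ) ^ (i + 1) ≤ 1 := by
  have : ∑ i ∈ Finset.range N, (1/2:ℝ) ^ (i + 1) = 1 - (1/2:ℝ) ^ N := by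
    induction N with
    | zero => simp
    | succ N ih => rw [Finset.sum_range_succ, ih]; ring
  rw [this]
  have : (0:ℝ) ≤ (1/2:ℝ)^N := by positivity
  linarith

lemma tail_tsum_eq (N : ℕ) : ∑' i : ℕ, (1/2:ℝ) ^ (i + N + 1) = (1/2:ℝ) ^ N := by
  calc ∑' i : ℕ, (1/2:ℝ) ^ (i + N + 1)
      = ∑' i : ℕ, (1/2:ℝ) ^ (N + 1) * (1/2:ℝ) ^ i := by
        refine tsum_congr fun i => ?_
        rw [← pow_add]; ring_nf
    _ = (1/2:ℝ) ^ (N + 1) * 2 := by rw [tsum_mul_left, tsum_geometric_two]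
    _ = (1/2:ℝ) ^ N := by rw [pow_succ]; ring

lemma dOmega_lt_of_forall_lt {x y : ℕ → ℝ} {ε : ℝ} (hε : 0 < ε) {N : ℕ}
    (hN : (1/2:ℝ) ^ N < ε / 2) (h : ∀ i < N, |x i - y i| ≤ ε / 2) :
    dOmega x y < ε := by
  have hsum := dOmega_summable x y
  rw [dOmega, ← Summable.sum_add_tsum_nat_add N hsum]
  have hmain : ∑ i ∈ Finset.range N, min |x i - y i| 1 / 2 ^ (i + 1) ≤ ε / 2 := by
    calc ∑ i ∈ Finset.range N, min |x i - y i| 1 / 2 ^ (i + 1)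
        ≤ ∑ i ∈ Finset.range N, (ε/2) * (1/2:ℝ) ^ (i + 1) := by
          refine Finset.sum_le_sum fun i hi => ?_
          have hi' := Finset.mem_range.1 hi
          have h1 : min |x i - y i| 1 ≤ ε / 2 := (min_le_left _ _).trans (h i hi')
          have h2 : (0:ℝ) ≤ ε/2 := by linarith
          rw [one_div, inv_pow, div_eq_mul_inv]
          gcongr
      _ = (ε/2) * ∑ i ∈ Finset.range N, (1/2:ℝ) ^ (i + 1) := by rw [Finset.mul_sum]
      _ ≤ (ε/2) * 1 := by
          have := sum_halves_le N
          have h2 : (0:ℝ) ≤ ε/2 := by linarith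
          exact mul_le_mul_of_nonneg_left this h2
      _ = ε/2 := mul_one _
  have htail : ∑' i : ℕ, min |x (i + N) - y (i + N)| 1 / 2 ^ (i + N + 1) ≤ (1/2:ℝ) ^ N := by
    rw [← tail_tsum_eq N]
    refine Summable.tsum_le_tsum (fun i => dterm_le x y (i + N)) ((summable_nat_add_iff N).2 hsum) ?_
    have : Summable (fun i : ℕ => (1/2:ℝ) ^ (i + 1)) := half_pow_summable
    exact (summable_nat_add_iff N).2 ((summable_nat_add_iff 1).2 summable_geometric_two)
  linarith


lemma riemannSum_coord (f : ℝ → ℕ → ℝ) {a b : ℝ} (P : TaggedPartition a b) (i : ℕ) :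
    riemannSum (fun t => f t i) P = riemannSum f P i := by
  simp [riemannSum, Finset.sum_apply, Pi.smul_apply, smul_eq_mul]

/-- Real-valued continuity within `[a,b]` at `t`, ε-δ form. -/
def ContWA (g : ℝ → ℝ) (a b t : ℝ) : Prop :=
  ∀ ε > 0, ∃ δ > 0, ∀ s ∈ Set.Icc a b, |s - t| < δ → |g s - g t| < ε

lemma not_ContWA_mem_D {g : ℝ → ℝ} {a b t : ℝ} (ht : t ∈ Set.Icc a b)
    (hnc : ¬ ContWA g a b t) : ∃ m : ℕ, t ∈ Dset g a b (1 / (m + 1)) := by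
  by_contra hall
  push_neg at hall
  apply hnc
  intro ε hε
  obtain ⟨m, hm⟩ := exists_nat_one_div_lt hε
  have hnot := hall m
  rw [Dset] at hnot
  simp only [Set.mem_setOf_eq, not_and] at hnot
  have := hnot ht
  push_neg at this
  obtain ⟨δ, hδ, hδ'⟩ := this
  refine ⟨δ, hδ, fun s hs hst => ?_⟩
  have := hδ' s hs t ht hst (by simpa using hδ)
  calc |g s - g t| < 1 / (m + 1) := this
    _ < ε := hm

lemma contD_of_coords {f : ℝ → ℕ → ℝ} {a b t : ℝ}
    (hco : ∀ i : ℕ, ContWA (fun s => f s i) a b t) :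
    ContinuousWithinAtD f (Set.Icc a b) t := by
  intro ε hε
  obtain ⟨N, hN⟩ := exists_pow_lt_of_lt_one (by positivity : (0:ℝ) < ε/2)
    (by norm_num : (1/2:ℝ) < 1)
  have key : ∀ M : ℕ, ∃ δ > 0, ∀ i < M, ∀ s ∈ Set.Icc a b, |s - t| < δ →
      |f s i - f t i| < ε / 2 := by
    intro M
    induction M with
    | zero => exact ⟨1, one_pos, fun i hi => absurd hi (Nat.not_lt_zero i)⟩
    | succ M ih =>
        obtain ⟨δ, hδ, hall⟩ := ih
        obtain ⟨δ', hδ', h'⟩ := hco M (ε/2) (by positivity)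
        refine ⟨min δ δ', lt_min hδ hδ', fun i hi s hs hst => ?_⟩
        rcases Nat.lt_succ_iff_lt_or_eq.mp hi with h | h
        · exact hall i h s hs (hst.trans_le (min_le_left _ _))
        · subst h; exact h' s hs (hst.trans_le (min_le_right _ _))
  obtain ⟨δ, hδ, hall⟩ := key N
  refine ⟨δ, hδ, fun s hs hst => ?_⟩
  exact dOmega_lt_of_forall_lt hε hN (fun i hi => (hall i hi s hs hst).le)


/-- `ℝ^ω` with the product topology (metrized by `dOmega`) has
the Lebesgue property. -/
theorem ROmega_lebesgueProperty (a b : ℝ) (hab : a < b) (f : ℝ → ℕ → ℝ)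
    (hf : ∃ x, HasRiemannIntegralD f a b x) :
    volume {t ∈ Set.Icc a b | ¬ ContinuousWithinAtD f (Set.Icc a b) t} = 0 := by
  obtain ⟨x, hx⟩ := hf
  classical
  -- each coordinate is Riemann integrable on [a,b]
  have coord : ∀ i : ℕ, ∀ ε > 0, ∃ δ > 0, ∀ P : TaggedPartition a b, P.MeshLT δ →
      |riemannSum (fun s => f s i) P - x i| < ε := by
    intro i ε hε
    obtain ⟨δ, hδ, hP⟩ := hx (min ε 1 / 2 ^ (i + 2)) (by positivity)
    refine ⟨δ, hδ, fun P hm => ?_⟩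
    have h1 := (coord_le_dOmega (riemannSum f P) x i).trans_lt (hP P hm)
    rw [div_lt_iff₀ (by positivity : (0:ℝ) < 2 ^ (i + 1))] at h1
    have h2 : min ε 1 / 2 ^ (i + 2) * 2 ^ (i + 1) = min ε 1 / 2 := by
      rw [pow_succ]
      field_simp
    rw [h2] at h1
    have hm1 : min ε 1 / 2 < 1 := by
      have : min ε 1 ≤ 1 := min_le_right _ _
      linarith
    have habs : |riemannSum f P i - x i| < min ε 1 / 2 := by
      rcases le_or_gt 1 |riemannSum f P i - x i| with h | h
      · exfalso
        rw [min_eq_right h] at h1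
        linarith
      · rwa [min_eq_left h.le] at h1
    rw [riemannSum_coord]
    have : min ε 1 / 2 ≤ ε := by
      have : min ε 1 ≤ ε := min_le_left _ _
      linarith
    linarith
  have hDnull : ∀ i m : ℕ, volume (Dset (fun s => f s i) a b (1 / (m + 1))) = 0 :=
    fun i m => Dset_null hab (by positivity) (coord i)
  have hcover : {t ∈ Set.Icc a b | ¬ ContinuousWithinAtD f (Set.Icc a b) t} ⊆
      ⋃ i : ℕ, ⋃ m : ℕ, Dset (fun s => f s i) a b (1 / (m + 1)) := by
    rintro t ⟨ht, hnc⟩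
    by_contra hmem
    simp only [Set.mem_iUnion, not_exists] at hmem
    apply hnc
    apply contD_of_coords
    intro i
    by_contra hci
    obtain ⟨m, hm⟩ := not_ContWA_mem_D ht hci
    exact hmem i m hm
  refine measure_mono_null hcover ?_
  exact measure_iUnion_null fun i => measure_iUnion_null fun m => hDnull i m
end

section
/- The spaces ℓᵖ (1 ≤ p ≤ ∞), regarded as linear subspaces of ℝ^ω with the subspace topology induced by the product-topology metric d(x,y) = Σᵢ min{|xᵢ−yᵢ|,1}/2ⁱ, have the Lebesgue property: every function f : [a,b] → ℓᵖ that is Riemann integrable with respect to the induced metric d is continuous (for d) almost everywhere. -/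
open Set MeasureTheory

namespace LpLeb

/-- Real-valued Riemann integrability with the mesh definition. -/
def HasRInt (f : ℝ → ℝ) (a b x : ℝ) : Prop :=
  ∀ ε > 0, ∃ δ > 0, ∀ P : TaggedPartition a b, P.MeshLT δ → |riemannSum f P - x| < ε

/-- Real-valued ε-δ continuity within a set. -/
def ContWA (f : ℝ → ℝ) (S : Set ℝ) (t : ℝ) : Prop :=
  ∀ ε > 0, ∃ δ > 0, ∀ s ∈ S, |s - t| < δ → |f s - f t| < ε

/-! ### Summability facts for `dOmega` -/

lemma summable_halfpow : Summable (fun i : ℕ => (1/2:ℝ) ^ (i + 1)) := by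
  have := summable_geometric_two.mul_left (1/2 : ℝ)
  simpa [pow_succ, mul_comm] using this

lemma summable_dterm (u v : ℕ → ℝ) :
    Summable (fun i : ℕ => min |u i - v i| 1 / 2 ^ (i + 1)) := by
  refine Summable.of_nonneg_of_le (fun i => by positivity) (fun i => ?_) summable_halfpow
  rw [div_pow, one_pow]
  gcongr
  exact min_le_right _ _

lemma coord_le_dOmega (u v : ℕ → ℝ) (i : ℕ) :
    min |u i - v i| 1 / 2 ^ (i + 1) ≤ dOmega u v :=
  Summable.le_tsum (summable_dterm u v) i (fun _ _ => by positivity)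

/-! ### Uniform partitions -/

noncomputable def unifT (a b : ℝ) (n : ℕ) (i : ℕ) : ℝ := a + i * ((b - a) / n)

lemma unifT_succ_sub (a b : ℝ) (n i : ℕ) :
    unifT a b n (i + 1) - unifT a b n i = (b - a) / n := by
  simp only [unifT]
  push_cast
  ring

lemma unifT_apply (a b : ℝ) (n i : ℕ) : unifT a b n i = a + i * ((b - a) / n) := rfl

lemma unifT_last (a b : ℝ) {n : ℕ} (hn : 0 < n) : unifT a b n n = b := by
  have h : (n:ℝ) ≠ 0 := Nat.cast_ne_zero.mpr hn.ne'
  rw [unifT_apply]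
  field_simp
  ring

noncomputable def unifP (a b : ℝ) (hab : a < b) (n : ℕ) (hn : 0 < n) (s : ℕ → ℝ)
    (hs : ∀ i < n, s i ∈ Set.Icc (unifT a b n i) (unifT a b n (i + 1))) :
    TaggedPartition a b where
  n := n
  t := unifT a b n
  s := s
  npos := hn
  left := by simp [unifT]
  right := unifT_last a b hn
  mono := by
    intro i _
    have h : 0 < (b - a) / n := div_pos (sub_pos.mpr hab) (Nat.cast_pos.mpr hn)
    have := unifT_succ_sub a b n i
    linarith
  tag_mem := hs

lemma unifP_meshLT (a b : ℝ) (hab : a < b) (n : ℕ) (hn : 0 < n) (s : ℕ → ℝ) (hs) {δ : ℝ}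
    (h : (b - a) / n < δ) : (unifP a b hab n hn s hs).MeshLT δ := by
  intro i _
  show unifT a b n (i + 1) - unifT a b n i < δ
  rw [unifT_succ_sub]; exact h

lemma riemannSum_unifP (f : ℝ → ℝ) (a b : ℝ) (hab : a < b) (n : ℕ) (hn : 0 < n)
    (s : ℕ → ℝ) (hs) :
    riemannSum f (unifP a b hab n hn s hs)
      = ∑ i ∈ Finset.range n, ((b - a) / n) * f (s i) := by
  unfold riemannSum
  refine Finset.sum_congr rfl fun i _ => ?_
  show (unifT a b n (i+1) - unifT a b n i) • f (s i) = _
  rw [unifT_succ_sub, smul_eq_mul]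

/-! ### The set of points of oscillation `≥ q` is null -/

lemma Dq_null (f : ℝ → ℝ) {a b : ℝ} (hab : a < b) {x : ℝ}
    (hf : HasRInt f a b x) {q : ℝ} (hq : 0 < q) :
    volume {t | t ∈ Icc a b ∧ ∀ δ > 0, ∃ s ∈ Icc a b, |s - t| < δ ∧ q ≤ |f s - f t|} = 0 := by
  classical
  set D := {t | t ∈ Icc a b ∧ ∀ δ > 0, ∃ s ∈ Icc a b, |s - t| < δ ∧ q ≤ |f s - f t|} with hD
  have key : ∀ ε : ℝ, 0 < ε → volume D ≤ ENNReal.ofReal ε := by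
    intro ε hε
    obtain ⟨δ, hδ, hP⟩ := hf (q * ε / 8) (by positivity)
    obtain ⟨n, hn⟩ := exists_nat_gt ((b - a) / δ)
    have hn0 : 0 < n := by
      rcases Nat.eq_zero_or_pos n with h | h
      · exfalso; rw [h] at hn; push_cast at hn
        nlinarith [div_pos (sub_pos.mpr hab) hδ]
      · exact h
    have hnR : (0:ℝ) < n := Nat.cast_pos.mpr hn0
    set Δ : ℝ := (b - a) / n with hΔdef
    have hΔ : 0 < Δ := div_pos (sub_pos.mpr hab) hnR
    have hnΔ : (n:ℝ) * Δ = b - a := by rw [hΔdef]; field_simp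
    have hmesh : Δ < δ := by
      rw [hΔdef, div_lt_iff₀ hnR]
      have h1 : (b - a) / δ * δ = b - a := by field_simp
      nlinarith
    set T := unifT a b n with hT
    have hTsucc : ∀ i, T (i + 1) - T i = Δ := fun i => unifT_succ_sub a b n i
    have hTle : ∀ i, T i ≤ T (i + 1) := fun i => by have := hTsucc i; linarith
    have hTapp : ∀ i : ℕ, T i = a + i * Δ := fun i => rfl
    set Bad : Finset ℕ := (Finset.range n).filter
      (fun i => ∃ y, y ∈ D ∧ y ∈ Set.Ioo (T i) (T (i + 1))) with hBad
    have hBadsub : Bad ⊆ Finset.range n := by rw [hBad]; exact Finset.filter_subset _ _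
    have hBadmem : ∀ i ∈ Bad, ∃ y, y ∈ D ∧ y ∈ Set.Ioo (T i) (T (i + 1)) := by
      intro i hi
      rw [hBad, Finset.mem_filter] at hi
      exact hi.2
    have hBadmem' : ∀ i, i < n → (∃ y, y ∈ D ∧ y ∈ Set.Ioo (T i) (T (i + 1))) → i ∈ Bad := by
      intro i hi hy
      rw [hBad, Finset.mem_filter]
      exact ⟨Finset.mem_range.mpr hi, hy⟩
    -- choose witnesses
    have hyex : ∀ i : ℕ, ∃ y, i ∈ Bad → y ∈ D ∧ y ∈ Set.Ioo (T i) (T (i + 1)) := by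
      intro i
      by_cases h : i ∈ Bad
      · obtain ⟨y, hy⟩ := hBadmem i h
        exact ⟨y, fun _ => hy⟩
      · exact ⟨a, fun h' => absurd h' h⟩
    choose y hy using hyex
    have hsex : ∀ i : ℕ, ∃ s, i ∈ Bad →
        s ∈ Set.Icc (T i) (T (i + 1)) ∧ q ≤ |f s - f (y i)| := by
      intro i
      by_cases h : i ∈ Bad
      · obtain ⟨hyD, hyI⟩ := hy i h
        have hδi : 0 < min (y i - T i) (T (i + 1) - y i) :=
          lt_min (sub_pos.mpr hyI.1) (sub_pos.mpr hyI.2)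
        obtain ⟨s, _, hsd, hsq⟩ := hyD.2 _ hδi
        have h1 := (abs_lt.mp hsd).1
        have h2 := (abs_lt.mp hsd).2
        refine ⟨s, fun _ => ⟨⟨?_, ?_⟩, hsq⟩⟩
        · have := min_le_left (y i - T i) (T (i + 1) - y i); linarith
        · have := min_le_right (y i - T i) (T (i + 1) - y i); linarith
      · exact ⟨a, fun h' => absurd h' h⟩
    choose s hs using hsex
    -- the main estimate, for any two choices of tags
    have main : ∀ u v : ℕ → ℝ,
        (∀ i < n, u i ∈ Set.Icc (T i) (T (i + 1))) →
        (∀ i < n, v i ∈ Set.Icc (T i) (T (i + 1))) →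
        ∀ C : Finset ℕ, C ⊆ Finset.range n →
        (∀ i ∈ C, q ≤ f (u i) - f (v i)) →
        (∀ i ∈ Finset.range n, i ∉ C → u i = v i) →
        (C.card : ℝ) * Δ ≤ ε / 4 := by
      intro u v hu hv C hC hq1 hq2
      have h1 := hP (unifP a b hab n hn0 u hu) (unifP_meshLT a b hab n hn0 u hu hmesh)
      have h2 := hP (unifP a b hab n hn0 v hv) (unifP_meshLT a b hab n hn0 v hv hmesh)
      have hdiff : riemannSum f (unifP a b hab n hn0 u hu)
            - riemannSum f (unifP a b hab n hn0 v hv)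
          = ∑ i ∈ C, Δ * (f (u i) - f (v i)) := by
        rw [riemannSum_unifP, riemannSum_unifP, ← Finset.sum_sub_distrib]
        rw [← Finset.sum_subset hC (fun i hi hiC => by rw [hq2 i hi hiC]; ring)]
        refine Finset.sum_congr rfl fun i _ => by rw [hΔdef]; ring
      have hlow : (C.card : ℝ) * (Δ * q) ≤ ∑ i ∈ C, Δ * (f (u i) - f (v i)) := by
        calc (C.card : ℝ) * (Δ * q) = ∑ _i ∈ C, Δ * q := by
              rw [Finset.sum_const, nsmul_eq_mul]
        _ ≤ ∑ i ∈ C, Δ * (f (u i) - f (v i)) := by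
              refine Finset.sum_le_sum fun i hi => ?_
              have := hq1 i hi
              nlinarith
      have hup : ∑ i ∈ C, Δ * (f (u i) - f (v i)) < q * ε / 4 := by
        rw [← hdiff]
        set ru := riemannSum f (unifP a b hab n hn0 u hu)
        set rv := riemannSum f (unifP a b hab n hn0 v hv)
        calc ru - rv ≤ |ru - rv| := le_abs_self _
        _ ≤ |ru - x| + |x - rv| := abs_sub_le _ _ _
        _ = |ru - x| + |rv - x| := by rw [abs_sub_comm x rv]
        _ < q * ε / 8 + q * ε / 8 := add_lt_add h1 h2
        _ = q * ε / 4 := by ring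
      nlinarith
    -- apply to the positive and negative parts of Bad
    have hTmem : ∀ i, T i ∈ Set.Icc (T i) (T (i + 1)) := fun i => ⟨le_refl _, hTle i⟩
    set BadP : Finset ℕ := Bad.filter (fun i => f (y i) ≤ f (s i)) with hBadP
    set BadN : Finset ℕ := Bad.filter (fun i => ¬ f (y i) ≤ f (s i)) with hBadN
    have hBadPsub : BadP ⊆ Bad := by rw [hBadP]; exact Finset.filter_subset _ _
    have hBadNsub : BadN ⊆ Bad := by rw [hBadN]; exact Finset.filter_subset _ _
    have hBadPmem : ∀ i ∈ BadP, f (y i) ≤ f (s i) := by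
      intro i hi; rw [hBadP, Finset.mem_filter] at hi; exact hi.2
    have hBadNmem : ∀ i ∈ BadN, ¬ f (y i) ≤ f (s i) := by
      intro i hi; rw [hBadN, Finset.mem_filter] at hi; exact hi.2
    have cardP : (BadP.card : ℝ) * Δ ≤ ε / 4 := by
      refine main (fun i => if i ∈ BadP then s i else T i)
        (fun i => if i ∈ BadP then y i else T i) ?_ ?_ BadP
        (hBadPsub.trans hBadsub) ?_ ?_
      · intro i _
        by_cases h : i ∈ BadP
        · simp only [h, if_true]
          exact (hs i (hBadPsub h)).1
        · simp only [h, if_false]; exact hTmem i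
      · intro i _
        by_cases h : i ∈ BadP
        · simp only [h, if_true]
          have hio := (hy i (hBadPsub h)).2
          exact ⟨le_of_lt hio.1, le_of_lt hio.2⟩
        · simp only [h, if_false]; exact hTmem i
      · intro i hi
        simp only [hi, if_true]
        have habs := (hs i (hBadPsub hi)).2
        have hfy : f (y i) ≤ f (s i) := hBadPmem i hi
        rwa [abs_of_nonneg (by linarith)] at habs
      · intro i _ hi
        simp only [hi, if_false]
    have cardN : (BadN.card : ℝ) * Δ ≤ ε / 4 := by
      refine main (fun i => if i ∈ BadN then y i else T i)
        (fun i => if i ∈ BadN then s i else T i) ?_ ?_ BadN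
        (hBadNsub.trans hBadsub) ?_ ?_
      · intro i _
        by_cases h : i ∈ BadN
        · simp only [h, if_true]
          have hio := (hy i (hBadNsub h)).2
          exact ⟨le_of_lt hio.1, le_of_lt hio.2⟩
        · simp only [h, if_false]; exact hTmem i
      · intro i _
        by_cases h : i ∈ BadN
        · simp only [h, if_true]
          exact (hs i (hBadNsub h)).1
        · simp only [h, if_false]; exact hTmem i
      · intro i hi
        simp only [hi, if_true]
        have habs := (hs i (hBadNsub hi)).2
        have hfy : ¬ f (y i) ≤ f (s i) := hBadNmem i hi
        push_neg at hfy
        rw [abs_of_neg (by linarith)] at habs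
        linarith
      · intro i _ hi
        simp only [hi, if_false]
    have cardBad : (Bad.card : ℝ) * Δ ≤ ε / 2 := by
      have hsubU : Bad ⊆ BadP ∪ BadN := by
        intro i hi
        by_cases h : f (y i) ≤ f (s i)
        · exact Finset.mem_union_left _ (by rw [hBadP]; exact Finset.mem_filter.mpr ⟨hi, h⟩)
        · exact Finset.mem_union_right _ (by rw [hBadN]; exact Finset.mem_filter.mpr ⟨hi, h⟩)
      have hcle : Bad.card ≤ BadP.card + BadN.card :=
        le_trans (Finset.card_le_card hsubU) (Finset.card_union_le _ _)
      have hcleR : (Bad.card : ℝ) ≤ (BadP.card : ℝ) + (BadN.card : ℝ) := by exact_mod_cast hcle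
      nlinarith
    -- covering
    have cover : D ⊆ (T '' (Set.Iic n)) ∪ ⋃ i ∈ Bad, Set.Icc (T i) (T (i + 1)) := by
      intro t' ht'
      have htI : t' ∈ Icc a b := ht'.1
      by_cases hpt : ∃ i ≤ n, T i = t'
      · exact Or.inl (by obtain ⟨i, hi, hTi⟩ := hpt; exact ⟨i, hi, hTi⟩)
      · right
        push_neg at hpt
        have hTn : T n = b := by rw [hT]; exact unifT_last a b hn0
        have hb' : t' < b := by
          rcases lt_or_eq_of_le htI.2 with h | h
          · exact h
          · exact absurd (hTn.trans h.symm) (hpt n (le_refl n))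
        have hnn : 0 ≤ (t' - a) / Δ := div_nonneg (by linarith [htI.1]) hΔ.le
        set i := ⌊(t' - a) / Δ⌋₊ with hi
        have hilt : i < n := by
          refine (Nat.floor_lt hnn).mpr ?_
          rw [div_lt_iff₀ hΔ]
          linarith
        have hTi_le : T i ≤ t' := by
          have hfl : (i:ℝ) ≤ (t' - a) / Δ := Nat.floor_le hnn
          have h2 : (i:ℝ) * Δ ≤ t' - a := (le_div_iff₀ hΔ).mp hfl
          rw [hTapp i]; linarith
        have hTi_lt : t' < T (i + 1) := by
          have h3 : (t' - a) / Δ < (i:ℝ) + 1 := Nat.lt_floor_add_one _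
          have h4 : t' - a < ((i:ℝ) + 1) * Δ := (div_lt_iff₀ hΔ).mp h3
          rw [hTapp (i + 1)]; push_cast; linarith
        have hTi_lt' : T i < t' :=
          lt_of_le_of_ne hTi_le (hpt i hilt.le)
        have hiBad : i ∈ Bad := hBadmem' i hilt ⟨t', ht', hTi_lt', hTi_lt⟩
        exact Set.mem_biUnion hiBad ⟨hTi_le, hTi_lt.le⟩
    calc volume D ≤ volume ((T '' (Set.Iic n)) ∪ ⋃ i ∈ Bad, Set.Icc (T i) (T (i + 1))) :=
          measure_mono cover
    _ ≤ volume (T '' (Set.Iic n)) + volume (⋃ i ∈ Bad, Set.Icc (T i) (T (i + 1))) :=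
          measure_union_le _ _
    _ ≤ 0 + ∑ i ∈ Bad, volume (Set.Icc (T i) (T (i + 1))) := by
          gcongr
          · exact le_of_eq (((Set.finite_Iic n).image T).measure_zero _)
          · exact measure_biUnion_finset_le _ _
    _ = ∑ _i ∈ Bad, ENNReal.ofReal Δ := by
          rw [zero_add]
          refine Finset.sum_congr rfl fun i _ => ?_
          rw [Real.volume_Icc, hTsucc]
    _ = ENNReal.ofReal ((Bad.card : ℝ) * Δ) := by
          rw [Finset.sum_const, nsmul_eq_mul, ← ENNReal.ofReal_natCast Bad.card,
            ← ENNReal.ofReal_mul (Nat.cast_nonneg _)]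
    _ ≤ ENNReal.ofReal ε := ENNReal.ofReal_le_ofReal (by linarith)
  refine le_antisymm ?_ zero_le
  refine ENNReal.le_of_forall_pos_le_add (fun ε hε _ => ?_)
  rw [zero_add]
  have hεR : (0:ℝ) < (ε:ℝ) := hε
  calc volume D ≤ ENNReal.ofReal (ε:ℝ) := key (ε:ℝ) hεR
  _ = (ε : ENNReal) := ENNReal.ofReal_coe_nnreal


/-- Classical Lebesgue criterion (one direction) for real-valued functions. -/
lemma real_lebesgue (f : ℝ → ℝ) {a b : ℝ} (hab : a < b) (x : ℝ)
    (hf : HasRInt f a b x) :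
    volume {t | t ∈ Icc a b ∧ ¬ ContWA f (Icc a b) t} = 0 := by
  refine measure_mono_null (t := ⋃ n : ℕ, {t | t ∈ Icc a b ∧ ∀ δ > 0,
      ∃ s ∈ Icc a b, |s - t| < δ ∧ (1:ℝ)/(n+1) ≤ |f s - f t|}) ?_
    (measure_iUnion_null fun n => Dq_null f hab hf (by positivity))
  intro t ht
  obtain ⟨htI, hnc⟩ := ht
  unfold ContWA at hnc
  push_neg at hnc
  obtain ⟨ε, hε, hcl⟩ := hnc
  obtain ⟨n, hn⟩ := exists_nat_one_div_lt hε
  refine Set.mem_iUnion.mpr ⟨n, htI, fun δ hδ => ?_⟩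
  obtain ⟨s, hsI, hsd, hsq⟩ := hcl δ hδ
  exact ⟨s, hsI, hsd, le_trans hn.le hsq⟩

/-- Each coordinate of a `dOmega`-Riemann-integrable function is Riemann integrable. -/
lemma coord_int (f : ℝ → ℕ → ℝ) {a b : ℝ} {x : ℕ → ℝ}
    (hf : HasRiemannIntegralD f a b x) (i : ℕ) :
    HasRInt (fun t => f t i) a b (x i) := by
  intro ε hε
  obtain ⟨δ, hδ, hP⟩ := hf (min ε 1 / 2 ^ (i + 1)) (by positivity)
  refine ⟨δ, hδ, fun P hm => ?_⟩
  have h1 := hP P hm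
  have h2 := coord_le_dOmega (riemannSum f P) x i
  have hcoord : riemannSum (fun t => f t i) P = riemannSum f P i := by
    simp [riemannSum, Finset.sum_apply]
  rw [hcoord]
  have hp : (0:ℝ) < 2 ^ (i + 1) := by positivity
  have h3 : min |riemannSum f P i - x i| 1 < min ε 1 := by
    have hlt := lt_of_le_of_lt h2 h1
    have := mul_lt_mul_of_pos_right hlt hp
    rwa [div_mul_cancel₀ _ hp.ne', div_mul_cancel₀ _ hp.ne'] at this
  rcases le_total |riemannSum f P i - x i| 1 with h | h
  · rw [min_eq_left h] at h3
    exact lt_of_lt_of_le h3 (min_le_left _ _)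
  · rw [min_eq_right h] at h3
    exact absurd h3 (not_lt.mpr (min_le_right ε 1))

lemma sum_halfpow_le (N : ℕ) : ∑ i ∈ Finset.range N, (1/2:ℝ) ^ (i + 1) ≤ 1 := by
  have hform : ∀ M : ℕ, ∑ i ∈ Finset.range M, (1/2:ℝ) ^ (i + 1) = 1 - (1/2:ℝ) ^ M := by
    intro M
    induction M with
    | zero => simp
    | succ m ih => rw [Finset.sum_range_succ, ih]; ring
  rw [hform]
  have : (0:ℝ) ≤ (1/2:ℝ) ^ N := by positivity
  linarith

lemma tsum_halfpow_shift (N : ℕ) :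
    ∑' i : ℕ, (1/2:ℝ) ^ (i + N + 1) = (1/2:ℝ) ^ N := by
  have h : ∀ i : ℕ, (1/2:ℝ) ^ (i + N + 1) = (1/2:ℝ) ^ (N + 1) * (1/2:ℝ) ^ i := by
    intro i; rw [← pow_add]; ring_nf
  rw [tsum_congr h, tsum_mul_left, tsum_geometric_of_lt_one (by norm_num) (by norm_num)]
  have : ((1:ℝ) - 1/2)⁻¹ = 2 := by norm_num
  rw [this, pow_succ]
  ring

/-- Coordinatewise continuity implies `dOmega`-continuity. -/
lemma cont_of_coords (f : ℝ → ℕ → ℝ) (S : Set ℝ) (t : ℝ)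
    (h : ∀ i, ContWA (fun u => f u i) S t) : ContinuousWithinAtD f S t := by
  classical
  intro ε hε
  obtain ⟨N, hN⟩ : ∃ N : ℕ, (1/2:ℝ) ^ N < ε / 2 :=
    exists_pow_lt_of_lt_one (by positivity) (by norm_num)
  choose δ hδpos hδ using fun i => h i (ε / 2) (by positivity)
  have hsumN : Summable (fun i : ℕ => (1/2:ℝ) ^ (i + N + 1)) := by
    have := summable_halfpow.comp_injective (add_left_injective N)
    simpa [Function.comp_def] using this
  set F : Finset ℝ := insert 1 ((Finset.range N).image δ) with hF
  have hFne : F.Nonempty := ⟨1, Finset.mem_insert_self _ _⟩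
  set δ₀ := F.min' hFne with hδ₀
  have hδ₀pos : 0 < δ₀ := by
    have hmem : δ₀ ∈ F := F.min'_mem hFne
    rw [hF, Finset.mem_insert] at hmem
    rcases hmem with h' | h'
    · rw [h']; norm_num
    · obtain ⟨i, _, hi⟩ := Finset.mem_image.mp h'
      rw [← hi]
      exact hδpos i
  refine ⟨δ₀, hδ₀pos, fun s hsS hst => ?_⟩
  have hsummle : Summable (fun i : ℕ => min |f s (i + N) - f t (i + N)| 1 / 2 ^ (i + N + 1)) := by
    refine Summable.of_nonneg_of_le (fun i => by positivity) (fun i => ?_) hsumN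
    calc min |f s (i + N) - f t (i + N)| 1 / 2 ^ (i + N + 1)
        ≤ 1 / 2 ^ (i + N + 1) := by gcongr; exact min_le_right _ _
    _ = (1/2:ℝ) ^ (i + N + 1) := by rw [div_pow, one_pow]
  have hsplit := Summable.sum_add_tsum_nat_add (f := fun i : ℕ => min |f s i - f t i| 1 / 2 ^ (i + 1)) N
    (summable_dterm (f s) (f t))
  have hhead : ∑ i ∈ Finset.range N, min |f s i - f t i| 1 / 2 ^ (i + 1) ≤ ε / 2 := by
    calc ∑ i ∈ Finset.range N, min |f s i - f t i| 1 / 2 ^ (i + 1)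
        ≤ ∑ i ∈ Finset.range N, (ε / 2) * (1/2:ℝ) ^ (i + 1) := by
          refine Finset.sum_le_sum fun i hi => ?_
          have hδ₀le : δ₀ ≤ δ i := by
            refine Finset.min'_le _ _ ?_
            rw [hF]
            exact Finset.mem_insert_of_mem (Finset.mem_image_of_mem δ hi)
          have hlt : |f s i - f t i| < ε / 2 := hδ i s hsS (lt_of_lt_of_le hst hδ₀le)
          have hb : min |f s i - f t i| 1 ≤ ε / 2 := le_trans (min_le_left _ _) hlt.le
          calc min |f s i - f t i| 1 / 2 ^ (i + 1) ≤ (ε / 2) / 2 ^ (i + 1) := by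
                gcongr
          _ = (ε / 2) * (1/2:ℝ) ^ (i + 1) := by
                rw [div_pow, one_pow, div_eq_mul_one_div (ε/2)]
    _ = (ε / 2) * ∑ i ∈ Finset.range N, (1/2:ℝ) ^ (i + 1) := by rw [Finset.mul_sum]
    _ ≤ (ε / 2) * 1 := by
          have := sum_halfpow_le N
          nlinarith
    _ = ε / 2 := mul_one _
  have htail : ∑' i : ℕ, min |f s (i + N) - f t (i + N)| 1 / 2 ^ (i + N + 1)
      ≤ (1/2:ℝ) ^ N := by
    calc ∑' i : ℕ, min |f s (i + N) - f t (i + N)| 1 / 2 ^ (i + N + 1)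
        ≤ ∑' i : ℕ, (1/2:ℝ) ^ (i + N + 1) := by
          refine Summable.tsum_le_tsum (fun i => ?_) hsummle hsumN
          calc min |f s (i + N) - f t (i + N)| 1 / 2 ^ (i + N + 1)
              ≤ 1 / 2 ^ (i + N + 1) := by gcongr; exact min_le_right _ _
          _ = (1/2:ℝ) ^ (i + N + 1) := by rw [div_pow, one_pow]
    _ = (1/2:ℝ) ^ N := tsum_halfpow_shift N
  have hsum : dOmega (f s) (f t)
      = (∑ i ∈ Finset.range N, min |f s i - f t i| 1 / 2 ^ (i + 1))
        + ∑' i : ℕ, min |f s (i + N) - f t (i + N)| 1 / 2 ^ (i + N + 1) := by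
    rw [dOmega, ← hsplit]
  rw [hsum]
  calc _ ≤ ε / 2 + (1/2:ℝ) ^ N := add_le_add hhead htail
  _ < ε / 2 + ε / 2 := by linarith
  _ = ε := by ring


end LpLeb

/-- `ℓᵖ` (`1 ≤ p ≤ ∞`), regarded as a subspace of `ℝ^ω` with the
metric `dOmega` of the product topology, has the Lebesgue property: any
`ℓᵖ`-valued function that is Riemann integrable for `dOmega` is `dOmega`-continuous
almost everywhere. -/
theorem lp_in_ROmega_lebesgueProperty (p : ENNReal) (hp : 1 ≤ p)
    (a b : ℝ) (hab : a < b) (f : ℝ → ℕ → ℝ)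
    (hmem : ∀ t ∈ Set.Icc a b, Memℓp (f t) p)
    (hf : ∃ x, HasRiemannIntegralD f a b x) :
    volume {t ∈ Set.Icc a b | ¬ ContinuousWithinAtD f (Set.Icc a b) t} = 0 := by
  obtain ⟨x, hx⟩ := hf
  refine measure_mono_null
    (t := ⋃ i : ℕ, {t | t ∈ Icc a b ∧ ¬ LpLeb.ContWA (fun u => f u i) (Icc a b) t}) ?_
    (measure_iUnion_null fun i => LpLeb.real_lebesgue _ hab (x i) (LpLeb.coord_int f hx i))
  intro t ht
  obtain ⟨htI, hnc⟩ := ht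
  by_contra hU
  rw [Set.mem_iUnion] at hU
  push_neg at hU
  refine hnc (LpLeb.cont_of_coords f _ t fun i => ?_)
  have hni := hU i
  rw [Set.mem_setOf_eq] at hni
  by_contra hC
  exact hni ⟨htI, hC⟩
end
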